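/- arXiv:1608.00524 — 5 statements merged into one kernel-verified Lean document; each statement's English description precedes it below -/
import Mathlib

section
/- Let X ⊂ ℝⁿ be a compact convex set, N ⊆ X a closed convex set with 0 ∈ N, V ⊆ X a nonempty compact convex set with 0 ∈ V, and W ⊂ ℝⁿ a nonempty closed convex set with 0 ∉ W which is semi-conic (w ∈ W and ρ ≥ 1 imply ρw ∈ W). Let 𝒰 be a nonempty compact convex set of symmetric positive definite ν×ν matrices, Ā a ν×n real matrix, and R > 0 such that for every ρ ∈ (0, R] the set F(ρ) = {(z, v, w) : z ∈ N, v ∈ V, w ∈ W, v + ρw ∈ X} is nonempty. Define, for ρ ∈ (0, R], 𝒮𝒱(ρ) = max over (z, v, w) ∈ F(ρ) and Θ ∈ 𝒰 of −⅛ (Ā(v + ρw − z))ᵀ Θ⁻¹ (Ā(v + ρw − z)). Then 𝒮𝒱 is a nonpositive, nonincreasing, concave and continuous function on (0, R], and lim_{ρ→0+} 𝒮𝒱(ρ) = 0. -/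
open Matrix Set

set_option maxHeartbeats 1000000
set_option synthInstance.maxHeartbeats 400000

private lemma quad_nonneg {ν : ℕ} {Θ : Matrix (Fin ν) (Fin ν) ℝ} (h : Θ.PosSemidef)
    (x : Fin ν → ℝ) : 0 ≤ x ⬝ᵥ (Θ *ᵥ x) := by
  simpa using h.dotProduct_mulVec_nonneg x

private lemma mulVec_inv_cancel {ν : ℕ} {Θ : Matrix (Fin ν) (Fin ν) ℝ} (h : Θ.PosDef)
    (x : Fin ν → ℝ) : Θ *ᵥ (Θ⁻¹ *ᵥ x) = x := by
  rw [Matrix.mulVec_mulVec, Matrix.mul_nonsing_inv _ (isUnit_iff_ne_zero.mpr h.det_pos.ne'),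
    Matrix.one_mulVec]

private lemma key_ineq {ν : ℕ} {Θ : Matrix (Fin ν) (Fin ν) ℝ} (h : Θ.PosDef)
    (x y : Fin ν → ℝ) :
    2 * (y ⬝ᵥ x) - y ⬝ᵥ (Θ *ᵥ y) ≤ x ⬝ᵥ (Θ⁻¹ *ᵥ x) := by
  set c : Fin ν → ℝ := Θ⁻¹ *ᵥ x with hc
  have h0 : 0 ≤ (y - c) ⬝ᵥ (Θ *ᵥ (y - c)) := quad_nonneg h.posSemidef _
  have hΘc : Θ *ᵥ c = x := mulVec_inv_cancel h x
  have hsym : c ⬝ᵥ (Θ *ᵥ y) = y ⬝ᵥ x := by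
    rw [Matrix.dotProduct_mulVec, ← Matrix.mulVec_transpose]
    have ht : Θᵀ = Θ := by
      have := h.isHermitian.eq
      rwa [Matrix.conjTranspose_eq_transpose_of_trivial] at this
    rw [ht, hΘc, dotProduct_comm]
  have hexp : (y - c) ⬝ᵥ (Θ *ᵥ (y - c))
      = y ⬝ᵥ (Θ *ᵥ y) - y ⬝ᵥ x - y ⬝ᵥ x + x ⬝ᵥ (Θ⁻¹ *ᵥ x) := by
    rw [Matrix.mulVec_sub, sub_dotProduct, dotProduct_sub, dotProduct_sub, hΘc, hsym]
    have : c ⬝ᵥ x = x ⬝ᵥ c := dotProduct_comm _ _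
    rw [this, hc]
    ring
  linarith [h0, hexp ▸ h0]

private lemma frac_ineq {ν : ℕ} {Θ₁ Θ₂ : Matrix (Fin ν) (Fin ν) ℝ}
    (h₁ : Θ₁.PosDef) (h₂ : Θ₂.PosDef) {a b : ℝ} (ha : 0 ≤ a) (hb : 0 ≤ b)
    (hΘ : (a • Θ₁ + b • Θ₂).PosDef) (x₁ x₂ : Fin ν → ℝ) :
    (a • x₁ + b • x₂) ⬝ᵥ ((a • Θ₁ + b • Θ₂)⁻¹ *ᵥ (a • x₁ + b • x₂)) ≤
      a * (x₁ ⬝ᵥ (Θ₁⁻¹ *ᵥ x₁)) + b * (x₂ ⬝ᵥ (Θ₂⁻¹ *ᵥ x₂)) := by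
  set x : Fin ν → ℝ := a • x₁ + b • x₂ with hx
  set Θ : Matrix (Fin ν) (Fin ν) ℝ := a • Θ₁ + b • Θ₂ with hΘdef
  set y : Fin ν → ℝ := Θ⁻¹ *ᵥ x with hy
  have hΘy : Θ *ᵥ y = x := mulVec_inv_cancel hΘ x
  have hmain : x ⬝ᵥ (Θ⁻¹ *ᵥ x) = 2 * (y ⬝ᵥ x) - y ⬝ᵥ (Θ *ᵥ y) := by
    rw [← hy, hΘy, dotProduct_comm]
    ring
  have hdec : 2 * (y ⬝ᵥ x) - y ⬝ᵥ (Θ *ᵥ y)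
      = a * (2 * (y ⬝ᵥ x₁) - y ⬝ᵥ (Θ₁ *ᵥ y)) + b * (2 * (y ⬝ᵥ x₂) - y ⬝ᵥ (Θ₂ *ᵥ y)) := by
    rw [hx, hΘdef, Matrix.add_mulVec, Matrix.smul_mulVec, Matrix.smul_mulVec,
      dotProduct_add, dotProduct_add, dotProduct_smul, dotProduct_smul, dotProduct_smul,
      dotProduct_smul]
    simp only [smul_eq_mul]
    ring
  have k1 := key_ineq h₁ x₁ y
  have k2 := key_ineq h₂ x₂ y
  have k1' := mul_le_mul_of_nonneg_left k1 ha
  have k2' := mul_le_mul_of_nonneg_left k2 hb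
  rw [hmain, hdec]
  linarith

theorem stmt2 {n ν : ℕ}
    (X N V W : Set (Fin n → ℝ))
    (hXconv : Convex ℝ X) (hXcomp : IsCompact X)
    (hNX : N ⊆ X) (hNclosed : IsClosed N) (hNconv : Convex ℝ N)
    (hN0 : (0 : Fin n → ℝ) ∈ N)
    (hVX : V ⊆ X) (hVne : V.Nonempty) (hVcomp : IsCompact V) (hVconv : Convex ℝ V)
    (hV0 : (0 : Fin n → ℝ) ∈ V)
    (hWne : W.Nonempty) (hWclosed : IsClosed W) (hWconv : Convex ℝ W)
    (hW0 : (0 : Fin n → ℝ) ∉ W)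
    (hWsc : ∀ w ∈ W, ∀ ρ : ℝ, 1 ≤ ρ → ρ • w ∈ W)
    (𝒰 : Set (Matrix (Fin ν) (Fin ν) ℝ)) (h𝒰ne : 𝒰.Nonempty) (h𝒰comp : IsCompact 𝒰)
    (h𝒰conv : Convex ℝ 𝒰) (h𝒰pd : ∀ Θ ∈ 𝒰, Θ.PosDef)
    (A : Matrix (Fin ν) (Fin n) ℝ) (R : ℝ) (hR : 0 < R)
    (hF : ∀ ρ ∈ Set.Ioc (0:ℝ) R, ∃ z ∈ N, ∃ v ∈ V, ∃ w ∈ W, v + ρ • w ∈ X)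
    (SV : ℝ → ℝ)
    (hSV : ∀ ρ ∈ Set.Ioc (0:ℝ) R, SV ρ =
      sSup {s : ℝ | ∃ z ∈ N, ∃ v ∈ V, ∃ w ∈ W, v + ρ • w ∈ X ∧ ∃ Θ ∈ 𝒰,
        s = -(1/8) * ((A *ᵥ (v + ρ • w - z)) ⬝ᵥ (Θ⁻¹ *ᵥ (A *ᵥ (v + ρ • w - z))))}) :
    (∀ ρ ∈ Set.Ioc (0:ℝ) R, SV ρ ≤ 0) ∧
    AntitoneOn SV (Set.Ioc 0 R) ∧
    ConcaveOn ℝ (Set.Ioc 0 R) SV ∧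
    ContinuousOn SV (Set.Ioc 0 R) ∧
    Filter.Tendsto SV (nhdsWithin 0 (Set.Ioc 0 R)) (nhds 0) := by
  classical
  set S : ℝ → Set ℝ := fun ρ => {s : ℝ | ∃ z ∈ N, ∃ v ∈ V, ∃ w ∈ W, v + ρ • w ∈ X ∧ ∃ Θ ∈ 𝒰,
        s = -(1/8) * ((A *ᵥ (v + ρ • w - z)) ⬝ᵥ (Θ⁻¹ *ᵥ (A *ᵥ (v + ρ • w - z))))} with hSdef
  have hSV' : ∀ ρ ∈ Set.Ioc (0:ℝ) R, SV ρ = sSup (S ρ) := hSV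
  have hSle : ∀ ρ : ℝ, ∀ s ∈ S ρ, s ≤ 0 := by
    rintro ρ s ⟨z, hz, v, hv, w, hw, hx, Θ, hΘ, rfl⟩
    have h1 : 0 ≤ (A *ᵥ (v + ρ • w - z)) ⬝ᵥ (Θ⁻¹ *ᵥ (A *ᵥ (v + ρ • w - z))) :=
      quad_nonneg ((h𝒰pd Θ hΘ).inv).posSemidef _
    linarith
  have hbdd : ∀ ρ : ℝ, BddAbove (S ρ) := fun ρ => ⟨0, fun s hs => hSle ρ s hs⟩
  have hSne : ∀ ρ ∈ Set.Ioc (0:ℝ) R, (S ρ).Nonempty := by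
    intro ρ hρ
    obtain ⟨z, hz, v, hv, w, hw, hx⟩ := hF ρ hρ
    obtain ⟨Θ, hΘ⟩ := h𝒰ne
    exact ⟨_, z, hz, v, hv, w, hw, hx, Θ, hΘ, rfl⟩
  have hSV0 : ∀ ρ ∈ Set.Ioc (0:ℝ) R, SV ρ ≤ 0 := fun ρ hρ =>
    (hSV' ρ hρ) ▸ csSup_le (hSne ρ hρ) (hSle ρ)
  have hgeS : ∀ ρ ∈ Set.Ioc (0:ℝ) R, ∀ s ∈ S ρ, s ≤ SV ρ := fun ρ hρ s hs =>
    (hSV' ρ hρ) ▸ le_csSup (hbdd ρ) hs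
  have hsub : ∀ ρ₁ ρ₂ : ℝ, 0 < ρ₁ → ρ₁ ≤ ρ₂ → S ρ₂ ⊆ S ρ₁ := by
    rintro ρ₁ ρ₂ h1 h12 s ⟨z, hz, v, hv, w, hw, hx, Θ, hΘ, rfl⟩
    have hcoef : ρ₁ * (ρ₂ / ρ₁) = ρ₂ := by field_simp
    have hsm : ρ₁ • ((ρ₂ / ρ₁) • w) = ρ₂ • w := by rw [smul_smul, hcoef]
    refine ⟨z, hz, v, hv, (ρ₂ / ρ₁) • w,
      hWsc w hw _ (by rw [le_div_iff₀ h1]; linarith), ?_, Θ, hΘ, ?_⟩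
    · rwa [hsm]
    · rw [hsm]
  have hanti : AntitoneOn SV (Set.Ioc 0 R) := by
    intro ρ₁ h₁ ρ₂ h₂ h12
    rw [hSV' ρ₁ h₁, hSV' ρ₂ h₂]
    exact csSup_le_csSup (hbdd ρ₁) (hSne ρ₂ h₂) (hsub ρ₁ ρ₂ h₁.1 h12)
  -- continuation: concavity
  have hcomb : ∀ ρ₁ ∈ Set.Ioc (0:ℝ) R, ∀ ρ₂ ∈ Set.Ioc (0:ℝ) R, ∀ a b : ℝ,
      0 < a → 0 < b → a + b = 1 →
      ∀ s₁ ∈ S ρ₁, ∀ s₂ ∈ S ρ₂, a * s₁ + b * s₂ ≤ SV (a * ρ₁ + b * ρ₂) := by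
    rintro ρ₁ h₁ ρ₂ h₂ a b ha hb hab s₁ hs₁ s₂ hs₂
    obtain ⟨z₁, hz₁, v₁, hv₁, w₁, hw₁, hx₁, Θ₁, hΘ₁, rfl⟩ := hs₁
    obtain ⟨z₂, hz₂, v₂, hv₂, w₂, hw₂, hx₂, Θ₂, hΘ₂, rfl⟩ := hs₂
    set ρ : ℝ := a * ρ₁ + b * ρ₂ with hρdef
    have hρ0 : 0 < ρ := by nlinarith [h₁.1, h₂.1]
    have hρR : ρ ∈ Set.Ioc (0:ℝ) R := by
      refine ⟨hρ0, ?_⟩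
      nlinarith [h₁.2, h₂.2]
    set z : Fin n → ℝ := a • z₁ + b • z₂ with hzdef
    have hz : z ∈ N := hNconv hz₁ hz₂ ha.le hb.le hab
    set v : Fin n → ℝ := a • v₁ + b • v₂ with hvdef
    have hv : v ∈ V := hVconv hv₁ hv₂ ha.le hb.le hab
    set w : Fin n → ℝ := ((a * ρ₁) / ρ) • w₁ + ((b * ρ₂) / ρ) • w₂ with hwdef
    have hw : w ∈ W := by
      refine hWconv hw₁ hw₂ (div_nonneg (mul_nonneg ha.le h₁.1.le) hρ0.le) (div_nonneg (mul_nonneg hb.le h₂.1.le) hρ0.le) ?_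
      rw [← add_div, ← hρdef, div_self hρ0.ne']
    have hρw : ρ • w = (a * ρ₁) • w₁ + (b * ρ₂) • w₂ := by
      rw [hwdef, smul_add, smul_smul, smul_smul, mul_div_cancel₀ _ hρ0.ne',
        mul_div_cancel₀ _ hρ0.ne']
    have hvw : v + ρ • w = a • (v₁ + ρ₁ • w₁) + b • (v₂ + ρ₂ • w₂) := by
      rw [hρw, hvdef]; module
    have hxmem : v + ρ • w ∈ X := hvw ▸ hXconv hx₁ hx₂ ha.le hb.le hab
    set Θ : Matrix (Fin ν) (Fin ν) ℝ := a • Θ₁ + b • Θ₂ with hΘdef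
    have hΘmem : Θ ∈ 𝒰 := h𝒰conv hΘ₁ hΘ₂ ha.le hb.le hab
    have hΘpd : Θ.PosDef := h𝒰pd Θ hΘmem
    set x₁ : Fin ν → ℝ := A *ᵥ (v₁ + ρ₁ • w₁ - z₁) with hx₁def
    set x₂ : Fin ν → ℝ := A *ᵥ (v₂ + ρ₂ • w₂ - z₂) with hx₂def
    have hdiff : v + ρ • w - z = a • (v₁ + ρ₁ • w₁ - z₁) + b • (v₂ + ρ₂ • w₂ - z₂) := by
      rw [hvw, hzdef]; module
    have hAx : A *ᵥ (v + ρ • w - z) = a • x₁ + b • x₂ := by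
      rw [hdiff, Matrix.mulVec_add, Matrix.mulVec_smul, Matrix.mulVec_smul]
    have hmem : -(1/8) * ((A *ᵥ (v + ρ • w - z)) ⬝ᵥ (Θ⁻¹ *ᵥ (A *ᵥ (v + ρ • w - z)))) ∈ S ρ :=
      ⟨z, hz, v, hv, w, hw, hxmem, Θ, hΘmem, rfl⟩
    have hfrac := frac_ineq (h𝒰pd Θ₁ hΘ₁) (h𝒰pd Θ₂ hΘ₂) ha.le hb.le (hΘdef ▸ hΘpd) x₁ x₂
    have hval : a * (-(1/8) * (x₁ ⬝ᵥ (Θ₁⁻¹ *ᵥ x₁))) + b * (-(1/8) * (x₂ ⬝ᵥ (Θ₂⁻¹ *ᵥ x₂)))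
        ≤ -(1/8) * ((A *ᵥ (v + ρ • w - z)) ⬝ᵥ (Θ⁻¹ *ᵥ (A *ᵥ (v + ρ • w - z)))) := by
      rw [hAx]
      have : (a • x₁ + b • x₂) ⬝ᵥ (Θ⁻¹ *ᵥ (a • x₁ + b • x₂)) ≤
          a * (x₁ ⬝ᵥ (Θ₁⁻¹ *ᵥ x₁)) + b * (x₂ ⬝ᵥ (Θ₂⁻¹ *ᵥ x₂)) := by
        rw [hΘdef]; exact hfrac
      linarith
    exact le_trans hval (hgeS ρ hρR _ hmem)
  have hconc : ConcaveOn ℝ (Set.Ioc (0:ℝ) R) SV := by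
    refine ⟨convex_Ioc 0 R, ?_⟩
    intro ρ₁ h₁ ρ₂ h₂ a b ha hb hab
    simp only [smul_eq_mul]
    rcases eq_or_lt_of_le ha with ha0 | ha'
    · have hb1 : b = 1 := by linarith
      simp [← ha0, hb1]
    rcases eq_or_lt_of_le hb with hb0 | hb'
    · have ha1 : a = 1 := by linarith
      simp [← hb0, ha1]
    have key := hcomb ρ₁ h₁ ρ₂ h₂ a b ha' hb' hab
    have hρR : a * ρ₁ + b * ρ₂ ∈ Set.Ioc (0:ℝ) R := by
      constructor
      · nlinarith [h₁.1, h₂.1]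
      · nlinarith [h₁.2, h₂.2]
    rw [hSV' ρ₁ h₁, hSV' ρ₂ h₂]
    have hstep1 : ∀ s₂ ∈ S ρ₂, a * sSup (S ρ₁) + b * s₂ ≤ SV (a * ρ₁ + b * ρ₂) := by
      intro s₂ hs₂
      have h1 : sSup (S ρ₁) ≤ (SV (a * ρ₁ + b * ρ₂) - b * s₂) / a := by
        refine csSup_le (hSne ρ₁ h₁) (fun s₁ hs₁ => ?_)
        rw [le_div_iff₀ ha']
        linarith [key s₁ hs₁ s₂ hs₂]
      rw [le_div_iff₀ ha'] at h1
      linarith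
    have h2 : sSup (S ρ₂) ≤ (SV (a * ρ₁ + b * ρ₂) - a * sSup (S ρ₁)) / b := by
      refine csSup_le (hSne ρ₂ h₂) (fun s₂ hs₂ => ?_)
      rw [le_div_iff₀ hb']
      linarith [hstep1 s₂ hs₂]
    rw [le_div_iff₀ hb'] at h2
    linarith
  -- continuation: lower scaling bound & limit at 0
  obtain ⟨z₀, hz₀, v₀, hv₀, w₀, hw₀, hx₀⟩ := hF R ⟨hR, le_refl R⟩
  obtain ⟨Θ₀, hΘ₀⟩ := h𝒰ne
  set q₀ : ℝ := (A *ᵥ (v₀ + R • w₀ - z₀)) ⬝ᵥ (Θ₀⁻¹ *ᵥ (A *ᵥ (v₀ + R • w₀ - z₀))) with hq₀def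
  have hq₀ : 0 ≤ q₀ := quad_nonneg ((h𝒰pd Θ₀ hΘ₀).inv).posSemidef _
  have hlow : ∀ ρ ∈ Set.Ioc (0:ℝ) R, -(1/8) * ((ρ / R)^2 * q₀) ≤ SV ρ := by
    intro ρ hρ
    set t : ℝ := ρ / R with htdef
    have ht0 : 0 < t := div_pos hρ.1 hR
    have ht1 : t ≤ 1 := by rw [htdef, div_le_one hR]; exact hρ.2
    have htR : t * R = ρ := by rw [htdef]; field_simp
    have hz' : t • z₀ ∈ N := by
      have := hNconv hz₀ hN0 ht0.le (by linarith : (0:ℝ) ≤ 1 - t) (by ring)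
      simpa using this
    have hv' : t • v₀ ∈ V := by
      have := hVconv hv₀ hV0 ht0.le (by linarith : (0:ℝ) ≤ 1 - t) (by ring)
      simpa using this
    have hsm : t • v₀ + ρ • w₀ = t • (v₀ + R • w₀) := by
      rw [smul_add, smul_smul, htR]
    have hx' : t • v₀ + ρ • w₀ ∈ X := by
      rw [hsm]
      have := hXconv hx₀ (hVX hV0) ht0.le (by linarith : (0:ℝ) ≤ 1 - t) (by ring)
      simpa using this
    have hmem : -(1/8) * ((A *ᵥ (t • v₀ + ρ • w₀ - t • z₀)) ⬝ᵥ
        (Θ₀⁻¹ *ᵥ (A *ᵥ (t • v₀ + ρ • w₀ - t • z₀)))) ∈ S ρ :=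
      ⟨t • z₀, hz', t • v₀, hv', w₀, hw₀, hx', Θ₀, hΘ₀, rfl⟩
    have hdiff : t • v₀ + ρ • w₀ - t • z₀ = t • (v₀ + R • w₀ - z₀) := by
      rw [hsm]; module
    have heq : -(1/8) * ((A *ᵥ (t • v₀ + ρ • w₀ - t • z₀)) ⬝ᵥ
        (Θ₀⁻¹ *ᵥ (A *ᵥ (t • v₀ + ρ • w₀ - t • z₀)))) = -(1/8) * (t^2 * q₀) := by
      rw [hdiff, Matrix.mulVec_smul, Matrix.mulVec_smul, smul_dotProduct, dotProduct_smul,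
        hq₀def]
      simp only [smul_eq_mul]
      ring
    have := hgeS ρ hρ _ hmem
    rw [heq] at this
    exact this
  have htend0 : Filter.Tendsto SV (nhdsWithin 0 (Set.Ioc 0 R)) (nhds 0) := by
    have hcont : Filter.Tendsto (fun ρ : ℝ => -(1/8) * ((ρ / R)^2 * q₀))
        (nhdsWithin 0 (Set.Ioc 0 R)) (nhds 0) := by
      have hc : Continuous (fun ρ : ℝ => -(1/8) * ((ρ / R)^2 * q₀)) :=
        continuous_const.mul (((continuous_id.div_const R).pow 2).mul continuous_const)
      have h2 : Filter.Tendsto (fun ρ : ℝ => -(1/8) * ((ρ / R)^2 * q₀))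
          (nhdsWithin 0 (Set.Ioc 0 R)) (nhds (-(1/8) * ((0 / R)^2 * q₀))) :=
        (hc.tendsto 0).mono_left nhdsWithin_le_nhds
      simpa using h2
    refine tendsto_of_tendsto_of_tendsto_of_le_of_le' hcont tendsto_const_nhds ?_ ?_
    · exact eventually_nhdsWithin_of_forall (fun ρ hρ => hlow ρ hρ)
    · exact eventually_nhdsWithin_of_forall (fun ρ hρ => hSV0 ρ hρ)
  -- continuation: upper semicontinuity at R via compactness
  have huscR : ∀ c : ℝ, SV R < c → ∃ δ > 0, ∀ ρ ∈ Set.Ioc (0:ℝ) R, R - δ < ρ → SV ρ < c := by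
    intro c hc
    by_contra hcon
    push_neg at hcon
    choose ρs hmem hgt hge using fun k : ℕ => hcon (1/((k:ℝ)+1)) (by positivity)
    set c' : ℝ := (SV R + c)/2 with hc'def
    have hc'1 : SV R < c' := by rw [hc'def]; linarith
    have hc'2 : c' < c := by rw [hc'def]; linarith
    have hex : ∀ k : ℕ, ∃ s ∈ S (ρs k), c' < s := by
      intro k
      refine exists_lt_of_lt_csSup (hSne _ (hmem k)) ?_
      rw [← hSV' _ (hmem k)]
      linarith [hge k]
    choose s hsmem hslt using hex
    choose z hz v hv w hw hx Θ hΘ hseq using hsmem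
    set u : ℕ → (Fin n → ℝ) := fun k => v k + (ρs k) • (w k) with hudef
    have hu : ∀ k, u k ∈ X := hx
    -- ρs tends to R
    have hρto : Filter.Tendsto ρs Filter.atTop (nhds R) := by
      have hlo : Filter.Tendsto (fun k : ℕ => R - 1/((k:ℝ)+1)) Filter.atTop (nhds R) := by
        have := tendsto_one_div_add_atTop_nhds_zero_nat (𝕜 := ℝ)
        have h2 := (tendsto_const_nhds (x := R) (f := Filter.atTop (α := ℕ))).sub this
        simpa using h2
      exact tendsto_of_tendsto_of_tendsto_of_le_of_le hlo tendsto_const_nhds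
        (fun k => (hgt k).le) (fun k => (hmem k).2)
    -- compactness
    set p : ℕ → (Fin n → ℝ) × ((Fin n → ℝ) × ((Fin n → ℝ) × Matrix (Fin ν) (Fin ν) ℝ)) :=
      fun k => (z k, v k, u k, Θ k) with hpdef
    have hK : IsCompact (X ×ˢ (V ×ˢ (X ×ˢ 𝒰))) := hXcomp.prod (hVcomp.prod (hXcomp.prod h𝒰comp))
    have hp : ∀ k, p k ∈ X ×ˢ (V ×ˢ (X ×ˢ 𝒰)) := by
      intro k
      exact ⟨hNX (hz k), hv k, hu k, hΘ k⟩
    haveI : FirstCountableTopology (Matrix (Fin ν) (Fin ν) ℝ) :=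
      inferInstanceAs (FirstCountableTopology (Fin ν → Fin ν → ℝ))
    obtain ⟨L, hL, φ, hφmono, hφtend⟩ := hK.tendsto_subseq hp
    obtain ⟨lz, lv, lu, lΘ⟩ := L
    obtain ⟨hlzX, hlv, hlu, hlΘ⟩ := hL
    have htz : Filter.Tendsto (fun k => z (φ k)) Filter.atTop (nhds lz) :=
      (continuous_fst.tendsto _).comp hφtend
    have htv : Filter.Tendsto (fun k => v (φ k)) Filter.atTop (nhds lv) :=
      ((continuous_fst.comp continuous_snd).tendsto _).comp hφtend
    have htu : Filter.Tendsto (fun k => u (φ k)) Filter.atTop (nhds lu) :=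
      ((continuous_fst.comp (continuous_snd.comp continuous_snd)).tendsto _).comp hφtend
    have htΘ : Filter.Tendsto (fun k => Θ (φ k)) Filter.atTop (nhds lΘ) :=
      ((continuous_snd.comp (continuous_snd.comp continuous_snd)).tendsto _).comp hφtend
    have hρφ : Filter.Tendsto (fun k => ρs (φ k)) Filter.atTop (nhds R) :=
      hρto.comp hφmono.tendsto_atTop
    -- limit memberships
    have hlz : lz ∈ N := hNclosed.mem_of_tendsto htz (Filter.Eventually.of_forall fun k => hz (φ k))
    have hlvV : lv ∈ V := hVcomp.isClosed.mem_of_tendsto htv (Filter.Eventually.of_forall fun k => hv (φ k))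
    have hluX : lu ∈ X := hXcomp.isClosed.mem_of_tendsto htu (Filter.Eventually.of_forall fun k => hu (φ k))
    have hlΘU : lΘ ∈ 𝒰 := h𝒰comp.isClosed.mem_of_tendsto htΘ (Filter.Eventually.of_forall fun k => hΘ (φ k))
    -- limit of w
    set lw : Fin n → ℝ := R⁻¹ • (lu - lv) with hlwdef
    have hwk : ∀ k, w k = (ρs k)⁻¹ • (u k - v k) := by
      intro k
      have h1 : u k - v k = (ρs k) • (w k) := by rw [hudef]; simp
      rw [h1, smul_smul, inv_mul_cancel₀ (hmem k).1.ne', one_smul]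
    have htw : Filter.Tendsto (fun k => w (φ k)) Filter.atTop (nhds lw) := by
      have h2 : Filter.Tendsto (fun k => (ρs (φ k))⁻¹ • (u (φ k) - v (φ k)))
          Filter.atTop (nhds (R⁻¹ • (lu - lv))) :=
        (hρφ.inv₀ hR.ne').smul (htu.sub htv)
      rw [hlwdef]
      exact h2.congr (fun k => (hwk (φ k)).symm)
    have hlw : lw ∈ W := hWclosed.mem_of_tendsto htw (Filter.Eventually.of_forall fun k => hw (φ k))
    have hlueq : lv + R • lw = lu := by
      rw [hlwdef, smul_inv_smul₀ hR.ne']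
      abel
    -- limit of values
    have hlΘpd : lΘ.PosDef := h𝒰pd lΘ hlΘU
    have hctinv : ContinuousAt Inv.inv lΘ := by
      refine continuousAt_matrix_inv lΘ ?_
      rw [Ring.inverse_eq_inv']
      exact continuousAt_inv₀ hlΘpd.det_pos.ne'
    have htΘinv : Filter.Tendsto (fun k => (Θ (φ k))⁻¹) Filter.atTop (nhds lΘ⁻¹) :=
      hctinv.tendsto.comp htΘ
    set sl : ℝ := -(1/8) * ((A *ᵥ (lu - lz)) ⬝ᵥ (lΘ⁻¹ *ᵥ (A *ᵥ (lu - lz)))) with hsldef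
    have hAcont : Continuous (fun x : Fin n → ℝ => A *ᵥ x) :=
      continuous_const.matrix_mulVec continuous_id
    have h1 : Filter.Tendsto (fun k => u (φ k) - z (φ k)) Filter.atTop (nhds (lu - lz)) :=
      htu.sub htz
    have h2 : Filter.Tendsto (fun k => A *ᵥ (u (φ k) - z (φ k))) Filter.atTop
        (nhds (A *ᵥ (lu - lz))) := (hAcont.tendsto _).comp h1
    have hmvcont : Continuous (fun q : (Matrix (Fin ν) (Fin ν) ℝ) × (Fin ν → ℝ) => q.1 *ᵥ q.2) :=
      continuous_fst.matrix_mulVec continuous_snd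
    have h3 : Filter.Tendsto (fun k => (Θ (φ k))⁻¹ *ᵥ (A *ᵥ (u (φ k) - z (φ k))))
        Filter.atTop (nhds (lΘ⁻¹ *ᵥ (A *ᵥ (lu - lz)))) :=
      (hmvcont.tendsto _).comp (htΘinv.prodMk_nhds h2)
    have hdpcont : Continuous (fun q : (Fin ν → ℝ) × (Fin ν → ℝ) => q.1 ⬝ᵥ q.2) :=
      continuous_fst.dotProduct continuous_snd
    have h4 : Filter.Tendsto (fun k => (A *ᵥ (u (φ k) - z (φ k))) ⬝ᵥ
        ((Θ (φ k))⁻¹ *ᵥ (A *ᵥ (u (φ k) - z (φ k))))) Filter.atTop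
        (nhds ((A *ᵥ (lu - lz)) ⬝ᵥ (lΘ⁻¹ *ᵥ (A *ᵥ (lu - lz))))) :=
      (hdpcont.tendsto _).comp (h2.prodMk_nhds h3)
    have hts : Filter.Tendsto (fun k => s (φ k)) Filter.atTop (nhds sl) := by
      have h5 := h4.const_mul (-(1/8) : ℝ)
      rw [hsldef]
      refine h5.congr (fun k => ?_)
      rw [← hseq (φ k)]
    have hslc' : c' ≤ sl := ge_of_tendsto hts (Filter.Eventually.of_forall fun k => (hslt (φ k)).le)
    have hslmem : sl ∈ S R := by
      refine ⟨lz, hlz, lv, hlvV, lw, hlw, ?_, lΘ, hlΘU, ?_⟩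
      · rw [hlueq]; exact hluX
      · rw [hlueq]
    have := hgeS R ⟨hR, le_refl R⟩ sl hslmem
    linarith
  -- continuity
  have hcontR : ContinuousWithinAt SV (Set.Ioc 0 R) R := by
    refine tendsto_order.2 ⟨?_, ?_⟩
    · intro a ha
      exact eventually_nhdsWithin_of_forall fun ρ hρ =>
        lt_of_lt_of_le ha (hanti hρ ⟨hR, le_refl R⟩ hρ.2)
    · intro c hc
      obtain ⟨δ, hδ, hδ2⟩ := huscR c hc
      have h1 : ∀ᶠ ρ in nhdsWithin R (Set.Ioc 0 R), R - δ < ρ :=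
        (eventually_gt_nhds (by linarith : R - δ < R)).filter_mono nhdsWithin_le_nhds
      filter_upwards [h1, self_mem_nhdsWithin] with ρ hρ1 hρ2
      exact hδ2 ρ hρ2 hρ1
  have hIoo : ContinuousOn SV (Set.Ioo (0:ℝ) R) := by
    have h2 := hconc.continuousOn_interior
    rwa [interior_Ioc] at h2
  have hcontOn : ContinuousOn SV (Set.Ioc 0 R) := by
    intro x hx
    rcases eq_or_lt_of_le hx.2 with hxR | hxR
    · rw [hxR]
      exact hcontR
    · have h1 : ContinuousAt SV x := hIoo.continuousAt (Ioo_mem_nhds hx.1 hxR)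
      exact h1.continuousWithinAt
  exact ⟨hSV0, hanti, hconc, hcontOn, htend0⟩
end

section
/- Let X ⊂ ℝⁿ be a compact convex set, N ⊆ X a closed convex set with 0 ∈ N, V ⊆ X a nonempty compact convex set with 0 ∈ V, and W ⊂ ℝⁿ a nonempty closed convex set with 0 ∉ W which is semi-conic (w ∈ W and ρ ≥ 1 imply ρw ∈ W). Let H be a real m×n matrix and R > 0 such that for every ρ ∈ (0, R] the set F(ρ) = {(z, v, w) : z ∈ N, v ∈ V, w ∈ W, v + ρw ∈ X} is nonempty. Define, for ρ ∈ (0, R], Γ(ρ) = min over (z, v, w) ∈ F(ρ) of ‖H(v + ρw − z)‖₂. Then Γ is a nonnegative, nondecreasing, continuous and convex function on (0, R] with lim_{ρ→0+} Γ(ρ) = 0. -/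
open Matrix Set

open Filter Topology

theorem stmt3 {n m : ℕ}
    (X N V W : Set (Fin n → ℝ))
    (hXconv : Convex ℝ X) (hXcomp : IsCompact X)
    (hNX : N ⊆ X) (hNclosed : IsClosed N) (hNconv : Convex ℝ N)
    (hN0 : (0 : Fin n → ℝ) ∈ N)
    (hVX : V ⊆ X) (hVne : V.Nonempty) (hVcomp : IsCompact V) (hVconv : Convex ℝ V)
    (hV0 : (0 : Fin n → ℝ) ∈ V)
    (hWne : W.Nonempty) (hWclosed : IsClosed W) (hWconv : Convex ℝ W)
    (hW0 : (0 : Fin n → ℝ) ∉ W)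
    (hWsc : ∀ w ∈ W, ∀ ρ : ℝ, 1 ≤ ρ → ρ • w ∈ W)
    (H : Matrix (Fin m) (Fin n) ℝ) (R : ℝ) (hR : 0 < R)
    (hF : ∀ ρ ∈ Set.Ioc (0:ℝ) R, ∃ z ∈ N, ∃ v ∈ V, ∃ w ∈ W, v + ρ • w ∈ X)
    (Γ : ℝ → ℝ)
    (hΓ : ∀ ρ ∈ Set.Ioc (0:ℝ) R, Γ ρ =
      sInf {r : ℝ | ∃ z ∈ N, ∃ v ∈ V, ∃ w ∈ W, v + ρ • w ∈ X ∧
        r = Real.sqrt (∑ i, ((H *ᵥ (v + ρ • w - z)) i)^2)}) :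
    (∀ ρ ∈ Set.Ioc (0:ℝ) R, 0 ≤ Γ ρ) ∧
    MonotoneOn Γ (Set.Ioc 0 R) ∧
    ContinuousOn Γ (Set.Ioc 0 R) ∧
    ConvexOn ℝ (Set.Ioc 0 R) Γ ∧
    Filter.Tendsto Γ (nhdsWithin 0 (Set.Ioc 0 R)) (nhds 0) := by
  classical
  set L : (Fin n → ℝ) →ₗ[ℝ] EuclideanSpace ℝ (Fin m) :=
    ((WithLp.linearEquiv 2 ℝ (Fin m → ℝ)).symm.toLinearMap).comp H.mulVecLin with hLdef
  have hLcont : Continuous L := L.continuous_of_finiteDimensional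
  have hgL : ∀ x : Fin n → ℝ, Real.sqrt (∑ i, ((H *ᵥ x) i)^2) = ‖L x‖ := by
    intro x
    rw [EuclideanSpace.norm_eq]
    congr 1
    apply Finset.sum_congr rfl
    intro i _
    rw [Real.norm_eq_abs, sq_abs]
    rfl
  set A : ℝ → Set ℝ := fun ρ => {r : ℝ | ∃ z ∈ N, ∃ v ∈ V, ∃ w ∈ W, v + ρ • w ∈ X ∧
      r = ‖L (v + ρ • w - z)‖} with hAdef
  have hΓ' : ∀ ρ ∈ Set.Ioc (0:ℝ) R, Γ ρ = sInf (A ρ) := by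
    intro ρ hρ
    rw [hΓ ρ hρ]
    congr 1
    ext r
    simp only [hAdef, mem_setOf_eq, hgL]
  have hAne : ∀ ρ ∈ Set.Ioc (0:ℝ) R, (A ρ).Nonempty := by
    intro ρ hρ
    obtain ⟨z, hz, v, hv, w, hw, hx⟩ := hF ρ hρ
    exact ⟨_, z, hz, v, hv, w, hw, hx, rfl⟩
  have hAnonneg : ∀ ρ : ℝ, ∀ r ∈ A ρ, (0:ℝ) ≤ r := by
    rintro ρ r ⟨z, hz, v, hv, w, hw, hx, rfl⟩
    exact norm_nonneg _
  have hAbdd : ∀ ρ : ℝ, BddBelow (A ρ) := fun ρ => ⟨0, fun r hr => hAnonneg ρ r hr⟩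
  have hnn : ∀ ρ ∈ Set.Ioc (0:ℝ) R, 0 ≤ Γ ρ := by
    intro ρ hρ
    rw [hΓ' ρ hρ]
    exact le_csInf (hAne ρ hρ) (hAnonneg ρ)
  -- set inclusion giving monotonicity
  have hsub : ∀ ρ₁ ρ₂ : ℝ, 0 < ρ₁ → ρ₁ ≤ ρ₂ → A ρ₂ ⊆ A ρ₁ := by
    rintro ρ₁ ρ₂ h1 h12 r ⟨z, hz, v, hv, w, hw, hx, rfl⟩
    have hmul : ρ₁ * (ρ₂ / ρ₁) = ρ₂ := by field_simp
    refine ⟨z, hz, v, hv, (ρ₂/ρ₁) • w, hWsc w hw _ ?_, ?_, ?_⟩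
    · rw [le_div_iff₀ h1]; linarith
    · rwa [smul_smul, hmul]
    · rw [smul_smul, hmul]
  have hmono : MonotoneOn Γ (Set.Ioc 0 R) := by
    intro a ha b hb hab
    rw [hΓ' a ha, hΓ' b hb]
    exact csInf_le_csInf (hAbdd a) (hAne b hb) (hsub a b ha.1 hab)
  -- fixed feasible point at R and upper bound
  obtain ⟨z₀, hz₀, v₀, hv₀, w₀, hw₀, hx₀⟩ := hF R ⟨hR, le_refl R⟩
  have h0X : (0 : Fin n → ℝ) ∈ X := hVX hV0
  set C0 : ℝ := ‖L (v₀ + R • w₀ - z₀)‖ with hC0def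
  have hub : ∀ ρ ∈ Set.Ioc (0:ℝ) R, Γ ρ ≤ ρ / R * C0 := by
    intro ρ hρ
    have ht0 : 0 ≤ ρ / R := div_nonneg hρ.1.le hR.le
    have ht1 : ρ / R ≤ 1 := (div_le_one hR).mpr hρ.2
    have hkey : (ρ/R) • v₀ + ρ • w₀ = (ρ/R) • (v₀ + R • w₀) := by
      rw [smul_add, smul_smul, div_mul_cancel₀ _ hR.ne']
    have hmem : ρ / R * C0 ∈ A ρ := by
      refine ⟨(ρ/R) • z₀, ?_, (ρ/R) • v₀, ?_, w₀, hw₀, ?_, ?_⟩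
      · have := hNconv hN0 hz₀ (by linarith : (0:ℝ) ≤ 1 - ρ/R) ht0 (by ring)
        simpa using this
      · have := hVconv hV0 hv₀ (by linarith : (0:ℝ) ≤ 1 - ρ/R) ht0 (by ring)
        simpa using this
      · rw [hkey]
        have := hXconv h0X hx₀ (by linarith : (0:ℝ) ≤ 1 - ρ/R) ht0 (by ring)
        simpa using this
      · rw [hkey, hC0def]
        have : (ρ/R) • (v₀ + R • w₀) - (ρ/R) • z₀ = (ρ/R) • (v₀ + R • w₀ - z₀) := by
          rw [smul_sub]
        rw [this, _root_.map_smul, norm_smul, Real.norm_eq_abs, abs_of_nonneg ht0]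
    rw [hΓ' ρ hρ]
    exact csInf_le (hAbdd ρ) hmem
  have htend0 : Filter.Tendsto Γ (nhdsWithin 0 (Set.Ioc 0 R)) (nhds 0) := by
    have h1 : Filter.Tendsto (fun ρ : ℝ => ρ / R * C0) (nhdsWithin 0 (Set.Ioc 0 R)) (nhds 0) := by
      have h2 : Filter.Tendsto (fun ρ : ℝ => ρ / R * C0) (nhds 0) (nhds (0 / R * C0)) :=
        (Filter.Tendsto.div_const tendsto_id R).mul_const C0
      simpa using h2.mono_left nhdsWithin_le_nhds
    refine tendsto_of_tendsto_of_tendsto_of_le_of_le' tendsto_const_nhds h1 ?_ ?_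
    · exact eventually_nhdsWithin_of_forall (fun ρ hρ => hnn ρ hρ)
    · exact eventually_nhdsWithin_of_forall (fun ρ hρ => hub ρ hρ)
  -- key combination bound
  have hcomb : ∀ x ∈ Set.Ioc (0:ℝ) R, ∀ y ∈ Set.Ioc (0:ℝ) R, ∀ a b : ℝ, 0 < a → 0 < b →
      a + b = 1 → ∀ r₁ ∈ A x, ∀ r₂ ∈ A y, sInf (A (a * x + b * y)) ≤ a * r₁ + b * r₂ := by
    rintro x hx y hy a b ha hb hab r₁ ⟨z₁, hz₁, v₁, hv₁, w₁, hw₁, hx₁, rfl⟩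
      r₂ ⟨z₂, hz₂, v₂, hv₂, w₂, hw₂, hx₂, rfl⟩
    set ρ := a * x + b * y with hρdef
    have hρpos : 0 < ρ := add_pos (mul_pos ha hx.1) (mul_pos hb hy.1)
    have hc1 : (0:ℝ) ≤ a * x / ρ := div_nonneg (mul_pos ha hx.1).le hρpos.le
    have hc2 : (0:ℝ) ≤ b * y / ρ := div_nonneg (mul_pos hb hy.1).le hρpos.le
    have hcsum : a * x / ρ + b * y / ρ = 1 := by
      field_simp
      exact hρdef.symm
    have he1 : ρ * (a * x / ρ) = a * x := by field_simp
    have he2 : ρ * (b * y / ρ) = b * y := by field_simp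
    have hrw : (a • v₁ + b • v₂) + ρ • ((a*x/ρ) • w₁ + (b*y/ρ) • w₂)
        = a • (v₁ + x • w₁) + b • (v₂ + y • w₂) := by
      rw [smul_add, smul_smul, smul_smul, he1, he2]
      module
    have hmem : ‖L ((a • v₁ + b • v₂) + ρ • ((a*x/ρ) • w₁ + (b*y/ρ) • w₂)
        - (a • z₁ + b • z₂))‖ ∈ A ρ := by
      refine ⟨a • z₁ + b • z₂, hNconv hz₁ hz₂ ha.le hb.le hab,
        a • v₁ + b • v₂, hVconv hv₁ hv₂ ha.le hb.le hab,
        (a*x/ρ) • w₁ + (b*y/ρ) • w₂, hWconv hw₁ hw₂ hc1 hc2 hcsum, ?_, rfl⟩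
      rw [hrw]
      exact hXconv hx₁ hx₂ ha.le hb.le hab
    refine le_trans (csInf_le (hAbdd ρ) hmem) ?_
    have hsplit : (a • v₁ + b • v₂) + ρ • ((a*x/ρ) • w₁ + (b*y/ρ) • w₂) - (a • z₁ + b • z₂)
        = a • (v₁ + x • w₁ - z₁) + b • (v₂ + y • w₂ - z₂) := by
      rw [smul_add, smul_smul, smul_smul, he1, he2]
      module
    rw [hsplit, map_add, _root_.map_smul, _root_.map_smul]
    calc ‖a • L (v₁ + x • w₁ - z₁) + b • L (v₂ + y • w₂ - z₂)‖
        ≤ ‖a • L (v₁ + x • w₁ - z₁)‖ + ‖b • L (v₂ + y • w₂ - z₂)‖ := norm_add_le _ _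
      _ = a * ‖L (v₁ + x • w₁ - z₁)‖ + b * ‖L (v₂ + y • w₂ - z₂)‖ := by
          rw [norm_smul, norm_smul, Real.norm_eq_abs, Real.norm_eq_abs,
            abs_of_nonneg ha.le, abs_of_nonneg hb.le]
  have hconvex : ConvexOn ℝ (Set.Ioc 0 R) Γ := by
    refine ⟨convex_Ioc 0 R, ?_⟩
    intro x hx y hy a b ha hb hab
    rcases eq_or_lt_of_le ha with rfl | ha'
    · have hb1 : b = 1 := by linarith
      subst hb1; simp
    rcases eq_or_lt_of_le hb with rfl | hb'
    · have ha1 : a = 1 := by linarith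
      subst ha1; simp
    have hρmem : a * x + b * y ∈ Set.Ioc (0:ℝ) R := by
      have := (convex_Ioc (0:ℝ) R) hx hy ha hb hab
      simpa [smul_eq_mul] using this
    simp only [smul_eq_mul]
    rw [hΓ' _ hρmem, hΓ' x hx, hΓ' y hy]
    refine le_of_forall_pos_le_add ?_
    intro ε hε
    obtain ⟨r₁, hr₁, hr₁'⟩ := Real.lt_sInf_add_pos (hAne x hx) hε
    obtain ⟨r₂, hr₂, hr₂'⟩ := Real.lt_sInf_add_pos (hAne y hy) hε
    have hle := hcomb x hx y hy a b ha' hb' hab r₁ hr₁ r₂ hr₂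
    have h1 : a * r₁ ≤ a * (sInf (A x) + ε) := by nlinarith
    have h2 : b * r₂ ≤ b * (sInf (A y) + ε) := by nlinarith
    have heq : a * (sInf (A x) + ε) + b * (sInf (A y) + ε)
        = a * sInf (A x) + b * sInf (A y) + (a + b) * ε := by ring
    rw [hab, one_mul] at heq
    linarith
  -- continuity
  have hcont : ContinuousOn Γ (Set.Ioc 0 R) := by
    have hcoi : ContinuousOn Γ (Set.Ioo 0 R) := by
      have := hconvex.continuousOn_interior
      rwa [interior_Ioc] at this
    intro ρ hρ
    rcases lt_or_eq_of_le hρ.2 with hlt | hEq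
    · exact ((hcoi.continuousAt (Ioo_mem_nhds hρ.1 hlt)).continuousWithinAt)
    · subst hEq
      -- continuity at the right endpoint
      have hclaim : ∀ ε : ℝ, 0 < ε → ∃ ρ₀ ∈ Set.Ioo (0:ℝ) ρ, Γ ρ - ε < Γ ρ₀ := by
        intro ε hε
        by_contra hcon
        push_neg at hcon
        set u : ℕ → ℝ := fun k => ρ - ρ / ((k:ℝ) + 2) with hudef
        have humem : ∀ k, u k ∈ Set.Ioo (0:ℝ) ρ := by
          intro k
          have hk : (1:ℝ) < (k:ℝ) + 2 := by
            have : (0:ℝ) ≤ (k:ℝ) := Nat.cast_nonneg k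
            linarith
          have h1 : ρ / ((k:ℝ)+2) < ρ := div_lt_self hρ.1 hk
          have h2 : 0 < ρ / ((k:ℝ)+2) := by positivity
          refine ⟨?_, ?_⟩
          · show (0:ℝ) < ρ - ρ / ((k:ℝ)+2); linarith
          · show ρ - ρ / ((k:ℝ)+2) < ρ; linarith
        have humem' : ∀ k, u k ∈ Set.Ioc (0:ℝ) ρ := fun k => ⟨(humem k).1, (humem k).2.le⟩
        have hchoice : ∀ k : ℕ, ∃ z ∈ N, ∃ v ∈ V, ∃ w ∈ W, (v + (u k) • w ∈ X) ∧
            ‖L (v + (u k) • w - z)‖ < Γ ρ - ε + 1/((k:ℝ)+1) := by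
          intro k
          obtain ⟨r, hrA, hrlt⟩ := Real.lt_sInf_add_pos (hAne _ (humem' k))
            (show (0:ℝ) < 1/((k:ℝ)+1) by positivity)
          obtain ⟨z, hz, v, hv, w, hw, hxk, rfl⟩ := hrA
          refine ⟨z, hz, v, hv, w, hw, hxk, ?_⟩
          have hGk : sInf (A (u k)) = Γ (u k) := (hΓ' _ (humem' k)).symm
          have hle : Γ (u k) ≤ Γ ρ - ε := hcon (u k) (humem k)
          rw [hGk] at hrlt
          linarith
        choose z hzN v hvV w hwW hxX hval using hchoice
        have hK : IsCompact (X ×ˢ X ×ˢ X) := hXcomp.prod (hXcomp.prod hXcomp)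
        have hpK : ∀ k, (z k, v k, v k + (u k) • w k) ∈ X ×ˢ X ×ˢ X :=
          fun k => ⟨hNX (hzN k), hVX (hvV k), hxX k⟩
        obtain ⟨q, hqK, φ, hφ, hφtend⟩ := hK.tendsto_subseq hpK
        have hφtop : Filter.Tendsto φ atTop atTop := hφ.tendsto_atTop
        have hzlim : Filter.Tendsto (fun k => z (φ k)) atTop (nhds q.1) :=
          (continuous_fst.tendsto q).comp hφtend
        have hvlim : Filter.Tendsto (fun k => v (φ k)) atTop (nhds q.2.1) :=
          ((continuous_fst.comp continuous_snd).tendsto q).comp hφtend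
        have hxlim : Filter.Tendsto (fun k => v (φ k) + (u (φ k)) • w (φ k)) atTop (nhds q.2.2) :=
          ((continuous_snd.comp continuous_snd).tendsto q).comp hφtend
        have hdenom : Filter.Tendsto (fun k : ℕ => (k:ℝ) + 2) atTop atTop :=
          tendsto_atTop_add_const_right atTop 2 tendsto_natCast_atTop_atTop
        have hu0 : Filter.Tendsto (fun k : ℕ => ρ / ((k:ℝ)+2)) atTop (nhds 0) :=
          Filter.Tendsto.div_atTop tendsto_const_nhds hdenom
        have huR : Filter.Tendsto u atTop (nhds ρ) := by
          have h : Filter.Tendsto (fun k : ℕ => ρ - ρ/((k:ℝ)+2)) atTop (nhds (ρ - 0)) :=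
            Filter.Tendsto.sub tendsto_const_nhds hu0
          simpa [hudef] using h
        have huRφ : Filter.Tendsto (fun k => u (φ k)) atTop (nhds ρ) := huR.comp hφtop
        have hwlim : Filter.Tendsto (fun k => w (φ k)) atTop
            (nhds (ρ⁻¹ • (q.2.2 - q.2.1))) := by
          have heq : (fun k => w (φ k)) = fun k =>
              (u (φ k))⁻¹ • ((v (φ k) + (u (φ k)) • w (φ k)) - v (φ k)) := by
            funext k
            have hne : u (φ k) ≠ 0 := (humem (φ k)).1.ne'
            rw [add_sub_cancel_left, smul_smul, inv_mul_cancel₀ hne, one_smul]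
          rw [heq]
          exact (huRφ.inv₀ hρ.1.ne').smul (hxlim.sub hvlim)
        have hwlimW : ρ⁻¹ • (q.2.2 - q.2.1) ∈ W :=
          hWclosed.mem_of_tendsto hwlim (Filter.Eventually.of_forall fun k => hwW (φ k))
        have hzlimN : q.1 ∈ N :=
          hNclosed.mem_of_tendsto hzlim (Filter.Eventually.of_forall fun k => hzN (φ k))
        have hvlimV : q.2.1 ∈ V :=
          hVcomp.isClosed.mem_of_tendsto hvlim (Filter.Eventually.of_forall fun k => hvV (φ k))
        have hxeq : q.2.1 + ρ • (ρ⁻¹ • (q.2.2 - q.2.1)) = q.2.2 := by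
          rw [smul_smul, mul_inv_cancel₀ hρ.1.ne', one_smul]
          abel
        have hmemAR : ‖L (q.2.2 - q.1)‖ ∈ A ρ := by
          refine ⟨q.1, hzlimN, q.2.1, hvlimV, ρ⁻¹ • (q.2.2 - q.2.1), hwlimW, ?_, ?_⟩
          · rw [hxeq]; exact hqK.2.2
          · rw [hxeq]
        have hΓRle : Γ ρ ≤ ‖L (q.2.2 - q.1)‖ := by
          rw [hΓ' ρ hρ]
          exact csInf_le (hAbdd ρ) hmemAR
        have hvaltend : Filter.Tendsto
            (fun k => ‖L (v (φ k) + (u (φ k)) • w (φ k) - z (φ k))‖) atTop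
            (nhds ‖L (q.2.2 - q.1)‖) :=
          ((hLcont.tendsto _).comp (hxlim.sub hzlim)).norm
        have hbtend : Filter.Tendsto (fun k : ℕ => Γ ρ - ε + 1/((φ k : ℝ)+1)) atTop
            (nhds (Γ ρ - ε)) := by
          have hd1 : Filter.Tendsto (fun k : ℕ => (k:ℝ) + 1) atTop atTop :=
            tendsto_atTop_add_const_right atTop 1 tendsto_natCast_atTop_atTop
          have h10 : Filter.Tendsto (fun k : ℕ => 1/((k:ℝ)+1)) atTop (nhds 0) :=
            Filter.Tendsto.div_atTop tendsto_const_nhds hd1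
          have h : Filter.Tendsto (fun k : ℕ => (Γ ρ - ε) + 1/((φ k:ℝ)+1)) atTop
              (nhds ((Γ ρ - ε) + 0)) := Filter.Tendsto.add tendsto_const_nhds (h10.comp hφtop)
          simpa using h
        have hfin : ‖L (q.2.2 - q.1)‖ ≤ Γ ρ - ε :=
          le_of_tendsto_of_tendsto' hvaltend hbtend (fun k => (hval (φ k)).le)
        linarith
      rw [Metric.continuousWithinAt_iff]
      intro ε hε
      obtain ⟨ρ₀, hρ₀, hρ₀'⟩ := hclaim ε hε
      refine ⟨ρ - ρ₀, by linarith [hρ₀.2], ?_⟩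
      intro x hxmem hdist
      rw [Real.dist_eq] at hdist ⊢
      have h1 : ρ₀ ≤ x := by
        rcases abs_lt.mp hdist with ⟨h, _⟩
        linarith
      have h2 : Γ ρ₀ ≤ Γ x := hmono ⟨hρ₀.1, hρ₀.2.le⟩ hxmem h1
      have h3 : Γ x ≤ Γ ρ := hmono hxmem hρ hxmem.2
      rw [abs_lt]
      constructor <;> linarith
  exact ⟨hnn, hmono, hcont, hconvex, htend0⟩
end

section
/- Let ε ∈ (0, 1/2), ε_t > 0, let L be a positive integer, and let δ > 0 satisfy δ ≥ ½(ErfInv(ε_t/L) + ErfInv(ε)). Set α = (δ/2)(ErfInv(ε) − ErfInv(ε_t/L)). Let Y be a random vector in ℝ^m on a probability space (Ω, ℱ, P) and let φ₁, …, φ_L : ℝ^m → ℝ be Borel functions. Then: (i) if for every k ∈ {1, …, L} and every real a ≤ δ² one has P(φ_k(Y) ≤ a) ≤ Erf(δ − a/δ), then P(∃ k ≤ L : φ_k(Y) < α) ≤ ε_t; (ii) if for some k ∈ {1, …, L} and every real b ≤ δ² one has P(φ_k(Y) ≥ −b) ≤ Erf(δ − b/δ), then P(φ_k(Y) ≥ α)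 ≤ ε. -/
open MeasureTheory

/-- `Erf s = (1/√(2π)) ∫_s^∞ exp(−r²/2) dr`, the standard Gaussian upper tail. -/
noncomputable def Erf (s : ℝ) : ℝ :=
  (Real.sqrt (2 * Real.pi))⁻¹ * ∫ r in Set.Ioi s, Real.exp (-(r^2) / 2)

/-- `ErfInv κ = min {r ≥ 0 : Erf r ≤ κ}` for `0 ≤ κ ≤ 1/2`, and `0` for `κ ≥ 1/2`. -/
noncomputable def ErfInv (κ : ℝ) : ℝ :=
  if κ < 1/2 then sInf {r : ℝ | 0 ≤ r ∧ Erf r ≤ κ} else 0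

lemma gauss_integrable : Integrable (fun r : ℝ => Real.exp (-(r^2) / 2)) := by
  have h : ∀ r : ℝ, -(r^2) / 2 = -((1/2 : ℝ)) * r^2 := fun r => by ring
  simp_rw [h]
  exact integrable_exp_neg_mul_sq (by norm_num)

lemma erf_sub {s t : ℝ} (h : s ≤ t) :
    Erf s - Erf t =
      (Real.sqrt (2 * Real.pi))⁻¹ * ∫ r in Set.Ioc s t, Real.exp (-(r^2) / 2) := by
  unfold Erf
  rw [← mul_sub]
  congr 1
  have hunion := Set.Ioc_union_Ioi_eq_Ioi h
  rw [← hunion, setIntegral_union (Set.Ioc_disjoint_Ioi le_rfl) measurableSet_Ioi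
    gauss_integrable.integrableOn gauss_integrable.integrableOn]
  ring

lemma erf_anti : Antitone Erf := by
  intro s t h
  have := erf_sub h
  have hnn : 0 ≤ ∫ r in Set.Ioc s t, Real.exp (-(r^2) / 2) :=
    setIntegral_nonneg measurableSet_Ioc fun x _ => (Real.exp_pos _).le
  nlinarith [Real.sqrt_nonneg (2 * Real.pi), inv_nonneg.mpr (Real.sqrt_nonneg (2 * Real.pi))]

lemma erf_lipschitz {s t : ℝ} (h : s ≤ t) :
    Erf s ≤ Erf t + (Real.sqrt (2 * Real.pi))⁻¹ * (t - s) := by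
  have hsub := erf_sub h
  have hle : ∫ r in Set.Ioc s t, Real.exp (-(r^2) / 2) ≤ t - s := by
    have : ∫ r in Set.Ioc s t, Real.exp (-(r^2) / 2) ≤ ∫ _ in Set.Ioc s t, (1 : ℝ) := by
      apply setIntegral_mono_on gauss_integrable.integrableOn
        (integrableOn_const measure_Ioc_lt_top.ne) measurableSet_Ioc
      intro x _
      simpa using Real.exp_le_one_iff.mpr (by nlinarith [sq_nonneg x] : -(x^2)/2 ≤ 0)
    rwa [setIntegral_const, Real.volume_real_Ioc_of_le h, smul_eq_mul, mul_one] at this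
  have hC : (0:ℝ) ≤ (Real.sqrt (2 * Real.pi))⁻¹ :=
    inv_nonneg.mpr (Real.sqrt_nonneg _)
  nlinarith

lemma erf_zero : Erf 0 = 1/2 := by
  unfold Erf
  have h : ∀ r : ℝ, -(r^2) / 2 = -((1/2 : ℝ)) * r^2 := fun r => by ring
  simp_rw [h]
  rw [integral_gaussian_Ioi]
  have h2 : Real.pi / (1/2 : ℝ) = 2 * Real.pi := by ring
  rw [h2]
  have hpos : (0:ℝ) < Real.sqrt (2 * Real.pi) :=
    Real.sqrt_pos.mpr (by positivity)
  field_simp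

lemma erf_tendsto : Filter.Tendsto Erf Filter.atTop (nhds 0) := by
  have hInt := gauss_integrable.integrableOn (s := Set.Ioi (0:ℝ))
  have h1 : Filter.Tendsto (fun r : ℝ => ∫ x in (0:ℝ)..r, Real.exp (-(x^2) / 2))
      Filter.atTop (nhds (∫ x in Set.Ioi (0:ℝ), Real.exp (-(x^2) / 2))) :=
    intervalIntegral_tendsto_integral_Ioi 0 hInt Filter.tendsto_id
  have h2 : Filter.Tendsto
      (fun r : ℝ => Erf 0 - (Real.sqrt (2 * Real.pi))⁻¹ * ∫ x in (0:ℝ)..r, Real.exp (-(x^2) / 2))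
      Filter.atTop (nhds 0) := by
    have := (h1.const_mul ((Real.sqrt (2 * Real.pi))⁻¹)).const_sub (Erf 0)
    convert this using 2
    unfold Erf
    ring
  apply h2.congr'
  filter_upwards [Filter.eventually_ge_atTop (0:ℝ)] with r hr
  have hsub := erf_sub hr
  rw [intervalIntegral.integral_of_le hr]
  have : ∫ x in Set.Ioc 0 r, Real.exp (-(x^2) / 2)
      = ∫ x in (Set.Ioc (0:ℝ) r : Set ℝ), Real.exp (-(x^2) / 2) := rfl
  linarith [hsub]

lemma erfinv_nonneg (κ : ℝ) : 0 ≤ ErfInv κ := by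
  unfold ErfInv
  split_ifs with h
  · exact Real.sInf_nonneg fun x hx => hx.1
  · exact le_rfl

lemma erf_erfinv_le {κ : ℝ} (hκ : 0 < κ) : Erf (ErfInv κ) ≤ κ := by
  unfold ErfInv
  split_ifs with h
  · set S : Set ℝ := {r : ℝ | 0 ≤ r ∧ Erf r ≤ κ} with hS
    have hne : S.Nonempty := by
      have := (erf_tendsto.eventually_lt_const hκ).and (Filter.eventually_ge_atTop (0:ℝ))
      obtain ⟨r, hr1, hr2⟩ := this.exists
      exact ⟨r, hr2, hr1.le⟩
    have hbdd : BddBelow S := ⟨0, fun x hx => hx.1⟩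
    have hC : (0:ℝ) < Real.sqrt (2 * Real.pi) := Real.sqrt_pos.mpr (by positivity)
    apply le_of_forall_pos_le_add
    intro η hη
    have hη' : 0 < η * Real.sqrt (2 * Real.pi) := by positivity
    obtain ⟨x, hxS, hx⟩ := (csInf_lt_iff hbdd hne).mp
      (lt_add_of_pos_right (sInf S) hη')
    have hle : sInf S ≤ x := csInf_le hbdd hxS
    have hlip := erf_lipschitz hle
    have : (Real.sqrt (2 * Real.pi))⁻¹ * (x - sInf S) ≤ η := by
      rw [← le_div_iff₀' (inv_pos.mpr hC)] at *
      calc x - sInf S ≤ η * Real.sqrt (2 * Real.pi) := by linarith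
        _ = η / (Real.sqrt (2 * Real.pi))⁻¹ := by field_simp
    linarith [hxS.2]
  · push_neg at h
    rw [erf_zero]
    exact h

theorem stmt5 {Ω : Type*} [MeasurableSpace Ω] (P : Measure Ω) [IsProbabilityMeasure P]
    (ε εt : ℝ) (hε : ε ∈ Set.Ioo 0 (1/2)) (hεt : 0 < εt)
    (L : ℕ) (hL : 1 ≤ L)
    (δ : ℝ) (hδpos : 0 < δ) (hδ : (1/2) * (ErfInv (εt / L) + ErfInv ε) ≤ δ)
    (α : ℝ) (hα : α = (δ/2) * (ErfInv ε - ErfInv (εt / L)))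
    {m : ℕ} (Y : Ω → (Fin m → ℝ)) (hY : Measurable Y)
    (φ : Fin L → (Fin m → ℝ) → ℝ) (hφ : ∀ k, Measurable (φ k)) :
    -- (i)
    ((∀ k, ∀ a : ℝ, a ≤ δ^2 →
        P {ω | φ k (Y ω) ≤ a} ≤ ENNReal.ofReal (Erf (δ - a/δ))) →
      P {ω | ∃ k, φ k (Y ω) < α} ≤ ENNReal.ofReal εt) ∧
    -- (ii)
    (∀ k, (∀ b : ℝ, b ≤ δ^2 →
        P {ω | -b ≤ φ k (Y ω)} ≤ ENNReal.ofReal (Erf (δ - b/δ))) →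
      P {ω | α ≤ φ k (Y ω)} ≤ ENNReal.ofReal ε) := by
  set u := ErfInv (εt / L) with hu
  set v := ErfInv ε with hv
  have hu0 : 0 ≤ u := erfinv_nonneg _
  have hv0 : 0 ≤ v := erfinv_nonneg _
  have hLpos : (0:ℝ) < (L:ℝ) := by exact_mod_cast hL
  have hεtL : 0 < εt / (L:ℝ) := div_pos hεt hLpos
  have hErfu : Erf u ≤ εt / L := erf_erfinv_le hεtL
  have hErfv : Erf v ≤ ε := erf_erfinv_le hε.1
  have hαδ : δ - α/δ = δ - (v - u)/2 := by
    rw [hα]; field_simp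
  constructor
  · -- part (i)
    intro h
    have ha : α ≤ δ^2 := by nlinarith
    have key : ∀ k, P {ω | φ k (Y ω) < α} ≤ ENNReal.ofReal (εt / L) := by
      intro k
      calc P {ω | φ k (Y ω) < α} ≤ P {ω | φ k (Y ω) ≤ α} :=
            measure_mono fun ω (hω : φ k (Y ω) < α) => hω.le
        _ ≤ ENNReal.ofReal (Erf (δ - α/δ)) := h k α ha
        _ ≤ ENNReal.ofReal (Erf u) := by
            apply ENNReal.ofReal_le_ofReal
            apply erf_anti
            rw [hαδ]; linarith
        _ ≤ ENNReal.ofReal (εt / L) := ENNReal.ofReal_le_ofReal hErfu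
    have hset : {ω | ∃ k, φ k (Y ω) < α} = ⋃ k, {ω | φ k (Y ω) < α} := by
      ext ω; simp [Set.mem_iUnion]
    rw [hset]
    calc P (⋃ k, {ω | φ k (Y ω) < α}) ≤ ∑' k, P {ω | φ k (Y ω) < α} :=
          measure_iUnion_le _
      _ ≤ ∑' (_ : Fin L), ENNReal.ofReal (εt / L) := ENNReal.tsum_le_tsum key
      _ = (L : ENNReal) * ENNReal.ofReal (εt / L) := by
          rw [tsum_fintype]
          simp [Finset.sum_const, mul_comm]
      _ = ENNReal.ofReal εt := by
          rw [← ENNReal.ofReal_natCast, ← ENNReal.ofReal_mul (by positivity)]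
          congr 1
          field_simp
  · -- part (ii)
    intro k h
    have hb : -α ≤ δ^2 := by nlinarith
    have hset : {ω | α ≤ φ k (Y ω)} = {ω | -(-α) ≤ φ k (Y ω)} := by
      simp
    calc P {ω | α ≤ φ k (Y ω)} ≤ ENNReal.ofReal (Erf (δ - (-α)/δ)) := by
          rw [hset]; exact h (-α) hb
      _ ≤ ENNReal.ofReal (Erf v) := by
          apply ENNReal.ofReal_le_ofReal
          apply erf_anti
          have : δ - (-α)/δ = δ + (v - u)/2 := by
            rw [hα]; field_simp; ring
          rw [this]; linarith
      _ ≤ ENNReal.ofReal ε := ENNReal.ofReal_le_ofReal hErfv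
end

section
/- Let ν, n ≥ 1, let Θ* be a symmetric positive definite ν×ν matrix, let γ ∈ (0, 1), let 𝒵 be a nonempty compact set of symmetric positive semidefinite (n+1)×(n+1) matrices, and let B be a real (ν+1)×(n+1) matrix. Then the function Γ(h, H) = ½ max_{Z∈𝒵} Tr(Z · Bᵀ(Q(H,h) + [H,h]ᵀ((Θ*)⁻¹ − H)⁻¹[H,h])B) is convex and continuous on the set ℋ^γ = {(h, H) ∈ ℝ^ν × Sym(ν) : −γ(Θ*)⁻¹ ⪯ H ⪯ γ(Θ*)⁻¹}. -/
open Matrix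

attribute [local instance] Matrix.normedAddCommGroup Matrix.normedSpace

section Aux

variable {m k : Type*} [Fintype m] [DecidableEq m] [Fintype k] [DecidableEq k]

lemma psd_smul {A : Matrix m m ℝ} (hA : A.PosSemidef) {c : ℝ} (hc : 0 ≤ c) :
    (c • A).PosSemidef := by
  have hherm : (c • A).IsHermitian := by
    rw [Matrix.IsHermitian, Matrix.conjTranspose_smul, star_trivial, hA.1.eq]
  refine Matrix.PosSemidef.of_dotProduct_mulVec_nonneg hherm fun x => ?_
  rw [smul_mulVec, dotProduct_smul]
  exact mul_nonneg hc (hA.dotProduct_mulVec_nonneg x)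

lemma pd_smul {A : Matrix m m ℝ} (hA : A.PosDef) {c : ℝ} (hc : 0 < c) :
    (c • A).PosDef := by
  have hherm : (c • A).IsHermitian := by
    rw [Matrix.IsHermitian, Matrix.conjTranspose_smul, star_trivial, hA.1.eq]
  refine Matrix.PosDef.of_dotProduct_mulVec_pos hherm fun x hx => ?_
  rw [smul_mulVec, dotProduct_smul]
  exact mul_pos hc (hA.dotProduct_mulVec_pos hx)

lemma psd_trace_nonneg {M : Matrix m m ℝ} (hM : M.PosSemidef) : 0 ≤ M.trace := by
  rw [Matrix.trace]
  refine Finset.sum_nonneg fun i _ => ?_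
  have := hM.dotProduct_mulVec_nonneg (Pi.single i 1)
  simpa [Matrix.diag, Matrix.mulVec_single, dotProduct, Pi.single_apply] using this

open scoped MatrixOrder in
lemma trace_mul_psd_nonneg {W D : Matrix m m ℝ} (hW : W.PosSemidef) (hD : D.PosSemidef) :
    0 ≤ (W * D).trace := by
  have h1 : W * D = W * (CFC.sqrt D * CFC.sqrt D) := by rw [CFC.sqrt_mul_sqrt_self D hD.nonneg]
  rw [h1, ← Matrix.mul_assoc, Matrix.trace_mul_comm]
  have h2 : (CFC.sqrt D * (W * CFC.sqrt D)).PosSemidef := by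
    have := hW.conjTranspose_mul_mul_same (CFC.sqrt D)
    rwa [(CFC.sqrt_nonneg D).posSemidef.1.eq, Matrix.mul_assoc] at this
  exact psd_trace_nonneg h2

lemma core_convex (A₁ A₂ : Matrix m m ℝ) (X₁ X₂ : Matrix m k ℝ)
    (h₁ : A₁.PosDef) (h₂ : A₂.PosDef) {t s : ℝ} (ht : 0 ≤ t) (hs : 0 ≤ s) (hts : t + s = 1) :
    (t • (X₁ᵀ * A₁⁻¹ * X₁) + s • (X₂ᵀ * A₂⁻¹ * X₂)
      - (t • X₁ + s • X₂)ᵀ * (t • A₁ + s • A₂)⁻¹ * (t • X₁ + s • X₂)).PosSemidef := by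
  have hA : (t • A₁ + s • A₂).PosDef := by
    rcases eq_or_lt_of_le ht with h | h
    · have hs1 : s = 1 := by linarith
      simpa [← h, hs1] using h₂
    · exact (pd_smul h₁ h).add_posSemidef (psd_smul h₂.posSemidef hs)
  haveI := (t • A₁ + s • A₂).invertibleOfIsUnitDet hA.det_pos.ne'.isUnit
  have key := (Matrix.PosDef.fromBlocks₁₁ (t • X₁ + s • X₂)
      (t • (X₁ᵀ * A₁⁻¹ * X₁) + s • (X₂ᵀ * A₂⁻¹ * X₂)) hA).mp
  rw [Matrix.conjTranspose_eq_transpose_of_trivial] at key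
  refine key ?_
  have hdecomp : Matrix.fromBlocks (t • A₁ + s • A₂) (t • X₁ + s • X₂)
      (t • X₁ + s • X₂)ᵀ (t • (X₁ᵀ * A₁⁻¹ * X₁) + s • (X₂ᵀ * A₂⁻¹ * X₂))
      = t • Matrix.fromBlocks A₁ X₁ X₁ᵀ (X₁ᵀ * A₁⁻¹ * X₁)
        + s • Matrix.fromBlocks A₂ X₂ X₂ᵀ (X₂ᵀ * A₂⁻¹ * X₂) := by
    ext i j
    rcases i with i | i <;> rcases j with j | j <;>
      simp [Matrix.fromBlocks, Matrix.transpose_apply]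
  rw [hdecomp]
  have hb : ∀ (A : Matrix m m ℝ) (X : Matrix m k ℝ), A.PosDef →
      (Matrix.fromBlocks A X Xᵀ (Xᵀ * A⁻¹ * X)).PosSemidef := by
    intro A X hApd
    haveI := A.invertibleOfIsUnitDet hApd.det_pos.ne'.isUnit
    have := (Matrix.PosDef.fromBlocks₁₁ X (Xᵀ * A⁻¹ * X) hApd).mpr
    rw [Matrix.conjTranspose_eq_transpose_of_trivial] at this
    exact this (by rw [sub_self]; exact Matrix.PosSemidef.zero)
  exact (psd_smul (hb A₁ X₁ h₁) ht).add (psd_smul (hb A₂ X₂ h₂) hs)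

lemma contAt_mul {X : Type*} [TopologicalSpace X] {l m' n' : Type*} [Fintype m']
    {f : X → Matrix l m' ℝ} {g : X → Matrix m' n' ℝ} {x : X}
    (hf : ContinuousAt f x) (hg : ContinuousAt g x) :
    ContinuousAt (fun x => f x * g x) x :=
  ((continuous_fst.matrix_mul continuous_snd).continuousAt).comp (hf.prodMk hg)

end Aux

/-- `[H, h]`, the `ν×(ν+1)` matrix whose first `ν` columns form `H` and last column is `h`. -/
noncomputable def HhMat {ν : ℕ} (H : Matrix (Fin ν) (Fin ν) ℝ) (h : Fin ν → ℝ) :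
    Matrix (Fin ν) (Fin ν ⊕ Unit) ℝ :=
  Matrix.of fun i j => Sum.elim (fun j' => H i j') (fun _ => h i) j

/-- `Q(H,h)`, the symmetric `(ν+1)×(ν+1)` matrix with NW block `H`, last column/row `(h;0)`. -/
noncomputable def Qmat {ν : ℕ} (H : Matrix (Fin ν) (Fin ν) ℝ) (h : Fin ν → ℝ) :
    Matrix (Fin ν ⊕ Unit) (Fin ν ⊕ Unit) ℝ :=
  Matrix.fromBlocks H (Matrix.of fun i (_ : Unit) => h i)
    (Matrix.of fun (_ : Unit) j => h j) 0

/-- `φ_𝒵(Y) = max_{Z ∈ 𝒵} Tr (Z Y)`, the support function of `𝒵`. -/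
noncomputable def phiZ {n : ℕ} (𝒵 : Set (Matrix (Fin n ⊕ Unit) (Fin n ⊕ Unit) ℝ))
    (Y : Matrix (Fin n ⊕ Unit) (Fin n ⊕ Unit) ℝ) : ℝ :=
  sSup ((fun Z => (Z * Y).trace) '' 𝒵)

lemma HhMat_comb {ν : ℕ} (a b : ℝ) (H₁ H₂ : Matrix (Fin ν) (Fin ν) ℝ) (h₁ h₂ : Fin ν → ℝ) :
    HhMat (a • H₁ + b • H₂) (a • h₁ + b • h₂) = a • HhMat H₁ h₁ + b • HhMat H₂ h₂ := by
  ext i j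
  rcases j with j | j <;> simp [HhMat]

lemma Qmat_comb {ν : ℕ} (a b : ℝ) (H₁ H₂ : Matrix (Fin ν) (Fin ν) ℝ) (h₁ h₂ : Fin ν → ℝ) :
    Qmat (a • H₁ + b • H₂) (a • h₁ + b • h₂) = a • Qmat H₁ h₁ + b • Qmat H₂ h₂ := by
  ext i j
  rcases i with i | i <;> rcases j with j | j <;> simp [Qmat, Matrix.fromBlocks]

lemma traceConj {ν n : ℕ} (Z : Matrix (Fin n ⊕ Unit) (Fin n ⊕ Unit) ℝ)
    (B : Matrix (Fin ν ⊕ Unit) (Fin n ⊕ Unit) ℝ) (M : Matrix (Fin ν ⊕ Unit) (Fin ν ⊕ Unit) ℝ) :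
    (Z * (Bᵀ * M * B)).trace = ((B * Z * Bᵀ) * M).trace := by
  rw [show Z * (Bᵀ * M * B) = (Z * Bᵀ * M) * B by simp [Matrix.mul_assoc],
    Matrix.trace_mul_comm, show B * (Z * Bᵀ * M) = (B * Z * Bᵀ) * M by simp [Matrix.mul_assoc]]

section Phi

variable {n : ℕ} {𝒵 : Set (Matrix (Fin n ⊕ Unit) (Fin n ⊕ Unit) ℝ)}

lemma phi_bdd (h𝒵comp : IsCompact 𝒵) (Y : Matrix (Fin n ⊕ Unit) (Fin n ⊕ Unit) ℝ) :
    BddAbove ((fun Z => (Z * Y).trace) '' 𝒵) :=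
  (h𝒵comp.image ((continuous_id.matrix_mul continuous_const).matrix_trace)).bddAbove

lemma phiZ_convexOn (h𝒵ne : 𝒵.Nonempty) (h𝒵comp : IsCompact 𝒵) :
    ConvexOn ℝ Set.univ (phiZ 𝒵) := by
  refine ⟨convex_univ, fun Y₁ _ Y₂ _ a b ha hb hab => ?_⟩
  refine csSup_le (h𝒵ne.image _) fun y hy => ?_
  obtain ⟨Z, hZ, rfl⟩ := hy
  have he : (Z * (a • Y₁ + b • Y₂)).trace = a * (Z * Y₁).trace + b * (Z * Y₂).trace := by
    simp [Matrix.mul_add, Matrix.mul_smul, Matrix.trace_add, Matrix.trace_smul, smul_eq_mul]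
  dsimp only
  rw [he, smul_eq_mul, smul_eq_mul]
  gcongr
  · exact le_csSup (phi_bdd h𝒵comp Y₁) ⟨Z, hZ, rfl⟩
  · exact le_csSup (phi_bdd h𝒵comp Y₂) ⟨Z, hZ, rfl⟩

lemma phiZ_continuous (h𝒵ne : 𝒵.Nonempty) (h𝒵comp : IsCompact 𝒵) :
    Continuous (phiZ 𝒵) := by
  rw [← continuousOn_univ]
  exact (phiZ_convexOn h𝒵ne h𝒵comp).continuousOn isOpen_univ

end Phi

/-- The matrix-valued map whose support-function composition gives `Γ`. -/
noncomputable def Mfun {ν : ℕ} (Θi : Matrix (Fin ν) (Fin ν) ℝ)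
    (p : (Fin ν → ℝ) × Matrix (Fin ν) (Fin ν) ℝ) : Matrix (Fin ν ⊕ Unit) (Fin ν ⊕ Unit) ℝ :=
  Qmat p.2 p.1 + (HhMat p.2 p.1)ᵀ * (Θi - p.2)⁻¹ * HhMat p.2 p.1

lemma Mfun_comb {ν : ℕ} (Θi : Matrix (Fin ν) (Fin ν) ℝ)
    {p q : (Fin ν → ℝ) × Matrix (Fin ν) (Fin ν) ℝ}
    (h1 : (Θi - p.2).PosDef) (h2 : (Θi - q.2).PosDef)
    {a b : ℝ} (ha : 0 ≤ a) (hb : 0 ≤ b) (hab : a + b = 1) :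
    (a • Mfun Θi p + b • Mfun Θi q - Mfun Θi (a • p + b • q)).PosSemidef := by
  have hAc : Θi - (a • p + b • q).2 = a • (Θi - p.2) + b • (Θi - q.2) := by
    show Θi - (a • p.2 + b • q.2) = _
    calc Θi - (a • p.2 + b • q.2)
        = (a • Θi + b • Θi) - (a • p.2 + b • q.2) := by rw [← add_smul, hab, one_smul]
      _ = a • (Θi - p.2) + b • (Θi - q.2) := by simp only [smul_sub]; abel
  have hXc : HhMat (a • p + b • q).2 (a • p + b • q).1
      = a • HhMat p.2 p.1 + b • HhMat q.2 q.1 := HhMat_comb a b p.2 q.2 p.1 q.1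
  have hQc : Qmat (a • p + b • q).2 (a • p + b • q).1
      = a • Qmat p.2 p.1 + b • Qmat q.2 q.1 := Qmat_comb a b p.2 q.2 p.1 q.1
  have hD := core_convex (Θi - p.2) (Θi - q.2) (HhMat p.2 p.1) (HhMat q.2 q.1) h1 h2 ha hb hab
  have heq : a • Mfun Θi p + b • Mfun Θi q - Mfun Θi (a • p + b • q)
      = a • ((HhMat p.2 p.1)ᵀ * (Θi - p.2)⁻¹ * HhMat p.2 p.1)
        + b • ((HhMat q.2 q.1)ᵀ * (Θi - q.2)⁻¹ * HhMat q.2 q.1)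
        - (a • HhMat p.2 p.1 + b • HhMat q.2 q.1)ᵀ
          * (a • (Θi - p.2) + b • (Θi - q.2))⁻¹
          * (a • HhMat p.2 p.1 + b • HhMat q.2 q.1) := by
    unfold Mfun
    rw [hQc, hXc, hAc]
    simp only [smul_add]
    abel
  rw [heq]
  exact hD

theorem stmt10 {ν n : ℕ} (hν : 1 ≤ ν) (hn : 1 ≤ n)
    (Θs : Matrix (Fin ν) (Fin ν) ℝ) (hΘs : Θs.PosDef)
    (γ : ℝ) (hγ : γ ∈ Set.Ioo (0:ℝ) 1)
    (𝒵 : Set (Matrix (Fin n ⊕ Unit) (Fin n ⊕ Unit) ℝ))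
    (h𝒵ne : 𝒵.Nonempty) (h𝒵comp : IsCompact 𝒵) (h𝒵psd : ∀ Z ∈ 𝒵, Z.PosSemidef)
    (B : Matrix (Fin ν ⊕ Unit) (Fin n ⊕ Unit) ℝ)
    (Γ : (Fin ν → ℝ) × Matrix (Fin ν) (Fin ν) ℝ → ℝ)
    (hΓ : ∀ p : (Fin ν → ℝ) × Matrix (Fin ν) (Fin ν) ℝ,
      Γ p = (1/2) * phiZ 𝒵 (Bᵀ *
        (Qmat p.2 p.1 + (HhMat p.2 p.1)ᵀ * (Θs⁻¹ - p.2)⁻¹ * (HhMat p.2 p.1)) * B)) :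
    ConvexOn ℝ {p : (Fin ν → ℝ) × Matrix (Fin ν) (Fin ν) ℝ |
        (p.2 + γ • Θs⁻¹).PosSemidef ∧ (γ • Θs⁻¹ - p.2).PosSemidef} Γ ∧
    ContinuousOn Γ {p : (Fin ν → ℝ) × Matrix (Fin ν) (Fin ν) ℝ |
        (p.2 + γ • Θs⁻¹).PosSemidef ∧ (γ • Θs⁻¹ - p.2).PosSemidef} := by
  have hΘinv : (Θs⁻¹).PosDef := hΘs.inv
  set S := {p : (Fin ν → ℝ) × Matrix (Fin ν) (Fin ν) ℝ |
      (p.2 + γ • Θs⁻¹).PosSemidef ∧ (γ • Θs⁻¹ - p.2).PosSemidef} with hSdef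
  have hΓ' : ∀ r, Γ r = (1/2) * phiZ 𝒵 (Bᵀ * Mfun Θs⁻¹ r * B) := hΓ
  -- The "denominator" matrix is positive definite on `S`.
  have hApd : ∀ p ∈ S, (Θs⁻¹ - p.2).PosDef := by
    intro p hp
    have h2 : ((1 - γ) • Θs⁻¹).PosDef := pd_smul hΘinv (by linarith [hγ.2])
    have he : Θs⁻¹ - p.2 = (γ • Θs⁻¹ - p.2) + (1 - γ) • Θs⁻¹ := by
      rw [sub_smul, one_smul]; abel
    rw [he]
    exact Matrix.PosDef.posSemidef_add hp.2 h2
  -- Convexity of `S`.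
  have hSconv : Convex ℝ S := by
    intro p hp q hq a b ha hb hab
    have hθ : γ • Θs⁻¹ = a • (γ • Θs⁻¹) + b • (γ • Θs⁻¹) := by
      rw [← add_smul, hab, one_smul]
    constructor
    · have he : (a • p + b • q).2 + γ • Θs⁻¹
          = a • (p.2 + γ • Θs⁻¹) + b • (q.2 + γ • Θs⁻¹) := by
        show (a • p.2 + b • q.2) + γ • Θs⁻¹ = _
        conv_lhs => rw [hθ]
        simp only [smul_add]; abel
      rw [he]
      exact (psd_smul hp.1 ha).add (psd_smul hq.1 hb)
    · have he : γ • Θs⁻¹ - (a • p + b • q).2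
          = a • (γ • Θs⁻¹ - p.2) + b • (γ • Θs⁻¹ - q.2) := by
        show γ • Θs⁻¹ - (a • p.2 + b • q.2) = _
        conv_lhs => rw [hθ]
        simp only [smul_sub]; abel
      rw [he]
      exact (psd_smul hp.2 ha).add (psd_smul hq.2 hb)
  constructor
  · -- Convexity of Γ.
    refine ⟨hSconv, fun p hp q hq a b ha hb hab => ?_⟩
    rw [hΓ', hΓ', hΓ']
    have hkey : phiZ 𝒵 (Bᵀ * Mfun Θs⁻¹ (a • p + b • q) * B)
        ≤ a * phiZ 𝒵 (Bᵀ * Mfun Θs⁻¹ p * B) + b * phiZ 𝒵 (Bᵀ * Mfun Θs⁻¹ q * B) := by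
      refine csSup_le (h𝒵ne.image _) ?_
      rintro y ⟨Z, hZ, rfl⟩
      dsimp only
      have hWpsd : (B * Z * Bᵀ).PosSemidef := by
        have := (h𝒵psd Z hZ).mul_mul_conjTranspose_same B
        rwa [Matrix.conjTranspose_eq_transpose_of_trivial] at this
      have hD := Mfun_comb Θs⁻¹ (hApd p hp) (hApd q hq) ha hb hab
      have h0 : 0 ≤ ((B * Z * Bᵀ) *
          (a • Mfun Θs⁻¹ p + b • Mfun Θs⁻¹ q - Mfun Θs⁻¹ (a • p + b • q))).trace :=
        trace_mul_psd_nonneg hWpsd hD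
      have hexp : ((B * Z * Bᵀ) *
            (a • Mfun Θs⁻¹ p + b • Mfun Θs⁻¹ q - Mfun Θs⁻¹ (a • p + b • q))).trace
          = a * ((B * Z * Bᵀ) * Mfun Θs⁻¹ p).trace
            + b * ((B * Z * Bᵀ) * Mfun Θs⁻¹ q).trace
            - ((B * Z * Bᵀ) * Mfun Θs⁻¹ (a • p + b • q)).trace := by
        simp [Matrix.mul_add, Matrix.mul_sub, Matrix.mul_smul, Matrix.trace_add,
          Matrix.trace_sub, Matrix.trace_smul, smul_eq_mul]
      rw [hexp] at h0
      have htr : (Z * (Bᵀ * Mfun Θs⁻¹ (a • p + b • q) * B)).trace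
          ≤ a * (Z * (Bᵀ * Mfun Θs⁻¹ p * B)).trace
            + b * (Z * (Bᵀ * Mfun Θs⁻¹ q * B)).trace := by
        rw [traceConj, traceConj, traceConj]
        linarith
      refine htr.trans ?_
      gcongr
      · exact le_csSup (phi_bdd h𝒵comp _) ⟨Z, hZ, rfl⟩
      · exact le_csSup (phi_bdd h𝒵comp _) ⟨Z, hZ, rfl⟩
    simp only [smul_eq_mul]
    nlinarith [hkey]
  · -- Continuity of Γ.
    have hcontHh : Continuous fun p : (Fin ν → ℝ) × Matrix (Fin ν) (Fin ν) ℝ =>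
        HhMat p.2 p.1 := by
      apply continuous_matrix
      intro i j
      rcases j with j | j
      · simp only [HhMat, Matrix.of_apply, Sum.elim_inl]
        exact (continuous_apply j).comp ((continuous_apply i).comp continuous_snd)
      · simp only [HhMat, Matrix.of_apply, Sum.elim_inr]
        exact (continuous_apply i).comp continuous_fst
    have hcontQ : Continuous fun p : (Fin ν → ℝ) × Matrix (Fin ν) (Fin ν) ℝ =>
        Qmat p.2 p.1 := by
      apply continuous_matrix
      intro i j
      rcases i with i | i <;> rcases j with j | j
      · simp only [Qmat, Matrix.fromBlocks, Matrix.of_apply, Sum.elim_inl]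
        exact (continuous_apply j).comp ((continuous_apply i).comp continuous_snd)
      · simp only [Qmat, Matrix.fromBlocks, Matrix.of_apply, Sum.elim_inl, Sum.elim_inr]
        exact (continuous_apply i).comp continuous_fst
      · simp only [Qmat, Matrix.fromBlocks, Matrix.of_apply, Sum.elim_inr, Sum.elim_inl]
        exact (continuous_apply j).comp continuous_fst
      · simp only [Qmat, Matrix.fromBlocks, Matrix.of_apply, Sum.elim_inr]
        exact continuous_const
    have hYcont : ∀ p ∈ S, ContinuousAt (fun r => Bᵀ * Mfun Θs⁻¹ r * B) p := by
      intro p hp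
      have hd : (Θs⁻¹ - p.2).det ≠ 0 := (hApd p hp).det_pos.ne'
      have hAc : Continuous fun r : (Fin ν → ℝ) × Matrix (Fin ν) (Fin ν) ℝ =>
          Θs⁻¹ - r.2 := continuous_const.sub continuous_snd
      have hinv : ContinuousAt (fun r : (Fin ν → ℝ) × Matrix (Fin ν) (Fin ν) ℝ =>
          (Θs⁻¹ - r.2)⁻¹) p := by
        have h1 : ContinuousAt Inv.inv (Θs⁻¹ - p.2) := by
          refine continuousAt_matrix_inv _ ?_
          have : (Ring.inverse : ℝ → ℝ) = Inv.inv := Ring.inverse_eq_inv'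
          rw [this]
          exact continuousAt_inv₀ hd
        have h2 : ContinuousAt (fun r : (Fin ν → ℝ) × Matrix (Fin ν) (Fin ν) ℝ =>
            Θs⁻¹ - r.2) p := hAc.continuousAt
        exact Filter.Tendsto.comp h1 h2
      unfold Mfun
      exact contAt_mul (contAt_mul continuousAt_const
        ((hcontQ.continuousAt).add
          (contAt_mul (contAt_mul (hcontHh.matrix_transpose.continuousAt) hinv)
            hcontHh.continuousAt))) continuousAt_const
    have hcont : ContinuousOn (fun r => (1/2 : ℝ) * phiZ 𝒵 (Bᵀ * Mfun Θs⁻¹ r * B)) S := by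
      refine continuousOn_const.mul ((phiZ_continuous h𝒵ne h𝒵comp).comp_continuousOn ?_)
      exact fun p hp => (hYcont p hp).continuousWithinAt
    exact hcont.congr fun p _ => hΓ' p
end

section
/- Let Θ* be a symmetric positive definite d×d matrix, let δ ∈ [0, 2], let Θ be a symmetric positive semidefinite d×d matrix with Θ ⪯ Θ* and ‖Θ^{1/2}(Θ*)^{−1/2} − I_d‖ ≤ δ, and let H be a symmetric d×d matrix with −(Θ*)⁻¹ ≺ H ≺ (Θ*)⁻¹. Then −½ ln Det(I − Θ^{1/2}HΘ^{1/2}) ≤ −½ ln Det(I − (Θ*)^{1/2}H(Θ*)^{1/2}) + ½ Tr((Θ − Θ*)H) + δ(2+δ) ‖(Θ*)^{1/2}H(Θ*)^{1/2}‖_F² / (2(1 − ‖(Θ*)^{1/2}H(Θ*)^{1/2}‖)). -/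
set_option maxHeartbeats 1000000
set_option synthInstance.maxHeartbeats 400000

open Matrix

/-- The positive semidefinite square root of a positive semidefinite matrix
(the definition of `Matrix.PosSemidef.sqrt` in the older Mathlib, since removed). -/
noncomputable def Matrix.PosSemidef.sqrt {n : Type*} [Fintype n] [DecidableEq n]
    {A : Matrix n n ℝ} (hA : A.PosSemidef) : Matrix n n ℝ :=
  hA.1.eigenvectorUnitary.1 * diagonal ((↑) ∘ (√·) ∘ hA.1.eigenvalues) *
    (star hA.1.eigenvectorUnitary : Matrix n n ℝ)

/-- The spectral norm of a square real matrix. -/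
noncomputable def specNorm {d : ℕ} (M : Matrix (Fin d) (Fin d) ℝ) : ℝ :=
  ‖Matrix.toEuclideanCLM (𝕜 := ℝ) M‖

/-- The Frobenius norm of a square real matrix. -/
noncomputable def frobNorm {d : ℕ} (M : Matrix (Fin d) (Fin d) ℝ) : ℝ :=
  Real.sqrt (∑ i, ∑ j, (M i j)^2)

theorem Matrix.PosSemidef.posSemidef_sqrt {n : Type*} [Fintype n] [DecidableEq n]
    {A : Matrix n n ℝ} (hA : A.PosSemidef) : hA.sqrt.PosSemidef := by
  unfold Matrix.PosSemidef.sqrt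
  rw [Matrix.star_eq_conjTranspose]
  exact (Matrix.PosSemidef.diagonal fun i => by simp [Real.sqrt_nonneg]).mul_mul_conjTranspose_same _

theorem Matrix.PosSemidef.sqrt_mul_self {n : Type*} [Fintype n] [DecidableEq n]
    {A : Matrix n n ℝ} (hA : A.PosSemidef) : hA.sqrt * hA.sqrt = A := by
  unfold Matrix.PosSemidef.sqrt
  have hU := Unitary.star_mul_self_of_mem hA.1.eigenvectorUnitary.2
  have key : ∀ (U D : Matrix n n ℝ), star U * U = 1 →
      U * D * star U * (U * D * star U) = U * (D * D) * star U := by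
    intro U D h
    rw [show U * D * star U * (U * D * star U) = U * D * (star U * U) * D * star U by
      simp only [mul_assoc], h, mul_one, mul_assoc U D D]
  rw [key _ _ hU]
  conv_rhs => rw [hA.1.spectral_theorem, Unitary.conjStarAlgAut_apply]
  congr 2
  rw [diagonal_mul_diagonal]
  congr 1
  funext i
  simp [Real.mul_self_sqrt (hA.eigenvalues_nonneg i)]

namespace StmtAux

variable {d : ℕ}

local notation "Mat" => Matrix (Fin d) (Fin d) ℝ

lemma specNorm_nonneg (M : Mat) : 0 ≤ specNorm M := norm_nonneg _

lemma specNorm_mul_le (M N : Mat) : specNorm (M * N) ≤ specNorm M * specNorm N := by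
  unfold specNorm; rw [_root_.map_mul]; exact norm_mul_le _ _

lemma specNorm_one_le : specNorm (1 : Mat) ≤ 1 := by
  unfold specNorm; rw [_root_.map_one]
  exact ContinuousLinearMap.norm_id_le

lemma conjT_eq_transpose (M : Mat) : Mᴴ = Mᵀ := by
  ext i j; simp [Matrix.conjTranspose_apply]

lemma specNorm_transpose (M : Mat) : specNorm Mᵀ = specNorm M := by
  unfold specNorm
  rw [← conjT_eq_transpose, ← Matrix.star_eq_conjTranspose, map_star,
    ContinuousLinearMap.star_eq_adjoint]
  exact LinearIsometryEquiv.norm_map ContinuousLinearMap.adjoint _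

lemma toCLM_apply (M : Mat) (v : Fin d → ℝ) :
    (Matrix.toEuclideanCLM (𝕜 := ℝ) M) ((WithLp.equiv 2 _).symm v) =
      (WithLp.equiv 2 _).symm (M *ᵥ v) := by
  rfl

lemma eucl_norm_eq (v : Fin d → ℝ) :
    ‖((WithLp.equiv 2 (Fin d → ℝ)).symm v : EuclideanSpace ℝ (Fin d))‖
      = Real.sqrt (∑ i, v i ^ 2) := by
  rw [EuclideanSpace.norm_eq]
  congr 1
  refine Finset.sum_congr rfl fun i _ => ?_
  rw [show ((WithLp.equiv 2 (Fin d → ℝ)).symm v).ofLp i = v i from rfl, Real.norm_eq_abs, sq_abs]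

lemma sqrt_sumsq_mulVec_le (M : Mat) (v : Fin d → ℝ) :
    Real.sqrt (∑ i, (M *ᵥ v) i ^ 2) ≤ specNorm M * Real.sqrt (∑ i, v i ^ 2) := by
  have h := (Matrix.toEuclideanCLM (𝕜 := ℝ) M).le_opNorm ((WithLp.equiv 2 _).symm v)
  rwa [toCLM_apply, eucl_norm_eq, eucl_norm_eq] at h

lemma sumsq_mulVec_le (M : Mat) (v : Fin d → ℝ) :
    ∑ i, (M *ᵥ v) i ^ 2 ≤ specNorm M ^ 2 * ∑ i, v i ^ 2 := by
  have h := sqrt_sumsq_mulVec_le M v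
  have h1 : (0:ℝ) ≤ ∑ i, (M *ᵥ v) i ^ 2 := Finset.sum_nonneg fun _ _ => sq_nonneg _
  have h2 : (0:ℝ) ≤ ∑ i, v i ^ 2 := Finset.sum_nonneg fun _ _ => sq_nonneg _
  nlinarith [Real.sq_sqrt h1, Real.sq_sqrt h2, Real.sqrt_nonneg (∑ i, (M *ᵥ v) i ^ 2),
    Real.sqrt_nonneg (∑ i, v i ^ 2), specNorm_nonneg M]

lemma specNorm_le_of_forall (M : Mat) (c : ℝ) (hc : 0 ≤ c)
    (h : ∀ v : Fin d → ℝ, Real.sqrt (∑ i, (M *ᵥ v) i ^ 2) ≤ c * Real.sqrt (∑ i, v i ^ 2)) :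
    specNorm M ≤ c := by
  apply ContinuousLinearMap.opNorm_le_bound _ hc
  intro x
  have hx : x = (WithLp.equiv 2 (Fin d → ℝ)).symm (WithLp.equiv 2 (Fin d → ℝ) x) :=
    (Equiv.symm_apply_apply _ _).symm
  rw [hx, toCLM_apply, eucl_norm_eq, eucl_norm_eq]
  exact h _

lemma dotProduct_transpose_mul (M : Mat) (v : Fin d → ℝ) :
    v ⬝ᵥ ((Mᵀ * M) *ᵥ v) = ∑ i, (M *ᵥ v) i ^ 2 := by
  rw [← Matrix.mulVec_mulVec, Matrix.dotProduct_mulVec, Matrix.vecMul_transpose]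
  simp [dotProduct, sq]

lemma specNorm_le_of_posSemidef {M : Mat} {c : ℝ} (hc : 0 ≤ c)
    (h : ((c ^ 2) • (1 : Mat) - Mᵀ * M).PosSemidef) : specNorm M ≤ c := by
  apply specNorm_le_of_forall M c hc
  intro v
  have h0 := h.dotProduct_mulVec_nonneg v
  rw [show star v = v from funext fun i => star_trivial _, Matrix.sub_mulVec, Matrix.smul_mulVec, Matrix.one_mulVec,
    dotProduct_sub, dotProduct_smul, dotProduct_transpose_mul] at h0
  have key : ∑ i, (M *ᵥ v) i ^ 2 ≤ c ^ 2 * ∑ i, v i ^ 2 := by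
    have hvv : v ⬝ᵥ v = ∑ i, v i ^ 2 := by
      simp [dotProduct, sq]
    rw [hvv] at h0
    simpa [smul_eq_mul] using sub_nonneg.mp h0
  calc Real.sqrt (∑ i, (M *ᵥ v) i ^ 2) ≤ Real.sqrt (c ^ 2 * ∑ i, v i ^ 2) :=
        Real.sqrt_le_sqrt key
    _ = c * Real.sqrt (∑ i, v i ^ 2) := by
        rw [Real.sqrt_mul (sq_nonneg c), Real.sqrt_sq hc]

lemma smul_one_eq_diag (ε : ℝ) : ε • (1 : Mat) = Matrix.diagonal (fun _ => ε) := by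
  ext i j
  by_cases h : i = j <;> simp [Matrix.one_apply, Matrix.diagonal_apply, h]

lemma smul_one_posSemidef {ε : ℝ} (hε : 0 ≤ ε) : (ε • (1 : Mat)).PosSemidef := by
  rw [smul_one_eq_diag]
  exact Matrix.PosSemidef.diagonal fun _ => hε

lemma exists_sub_smul_one {P : Mat} (hP : P.PosDef) :
    ∃ ε : ℝ, 0 < ε ∧ ε ≤ 1 ∧ (P - ε • 1).PosSemidef := by
  by_cases hd : Nonempty (Fin d)
  · haveI := hd
    have hH := hP.isHermitian
    set μ := Finset.univ.inf' Finset.univ_nonempty hH.eigenvalues with hμ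
    have hμpos : 0 < μ := by
      rw [hμ, Finset.lt_inf'_iff]
      exact fun i _ => hP.eigenvalues_pos i
    refine ⟨min 1 μ, lt_min one_pos hμpos, min_le_left _ _, ?_⟩
    set ε := min 1 μ with hε
    have hU : (hH.eigenvectorUnitary : Mat) * star (hH.eigenvectorUnitary : Mat) = 1 :=
      Unitary.mul_star_self_of_mem (hH.eigenvectorUnitary).2
    have hdecomp : P - ε • 1 = (hH.eigenvectorUnitary : Mat) *
        Matrix.diagonal (fun i => hH.eigenvalues i - ε) * star (hH.eigenvectorUnitary : Mat) := by
      have hst := hH.spectral_theorem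
      rw [Unitary.conjStarAlgAut_apply] at hst
      calc P - ε • 1
          = (hH.eigenvectorUnitary : Mat) * Matrix.diagonal (RCLike.ofReal ∘ hH.eigenvalues) *
              star (hH.eigenvectorUnitary : Mat)
            - (hH.eigenvectorUnitary : Mat) * (ε • 1) * star (hH.eigenvectorUnitary : Mat) := by
            rw [← hst]
            congr 1
            rw [mul_smul_comm, smul_mul_assoc, mul_one, hU]
        _ = (hH.eigenvectorUnitary : Mat) *
              (Matrix.diagonal (RCLike.ofReal ∘ hH.eigenvalues) - ε • 1) *
              star (hH.eigenvectorUnitary : Mat) := by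
            rw [mul_sub, sub_mul]
        _ = _ := by
            congr 1
            congr 1
            rw [smul_one_eq_diag, Matrix.diagonal_sub]
            rfl
    rw [hdecomp, Matrix.star_eq_conjTranspose]
    exact Matrix.PosSemidef.mul_mul_conjTranspose_same
      (Matrix.PosSemidef.diagonal fun i => by
        have : ε ≤ hH.eigenvalues i := le_trans (min_le_right _ _)
          (Finset.inf'_le _ (Finset.mem_univ i))
        simp only [Pi.zero_apply]; linarith) _
  · haveI : IsEmpty (Fin d) := not_nonempty_iff.mp hd
    refine ⟨1, one_pos, le_refl _, ⟨?_, fun x => ?_⟩⟩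
    · ext i j
      exact absurd ⟨i⟩ hd
    · simp [Finsupp.sum, Finset.eq_empty_of_isEmpty]

lemma specNorm_lt_one {M : Mat} (hM : M.IsHermitian)
    (h1 : ((1 : Mat) - M).PosDef) (h2 : ((1 : Mat) + M).PosDef) : specNorm M < 1 := by
  obtain ⟨ε, hε, hε1, hP1⟩ := exists_sub_smul_one h1
  obtain ⟨ε', hε', hε1', hP2⟩ := exists_sub_smul_one h2
  set η := min ε ε' with hη
  have hηpos : 0 < η := lt_min hε hε'
  have hη1 : η ≤ 1 := le_trans (min_le_left _ _) hε1
  set c := 1 - η with hc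
  have hc0 : 0 ≤ c := by simp [hc]; linarith
  have hc1 : c < 1 := by simp [hc]; linarith
  have hW : (c • (1 : Mat) - M).PosSemidef := by
    have heq : c • (1 : Mat) - M = (((1 : Mat) - M) - ε • 1) + (ε - η) • 1 := by
      rw [hc]; module
    rw [heq]
    exact hP1.add (smul_one_posSemidef (sub_nonneg.mpr (min_le_left ε ε')))
  have hW2 : (c • (1 : Mat) + M).PosSemidef := by
    have heq : c • (1 : Mat) + M = (((1 : Mat) + M) - ε' • 1) + (ε' - η) • 1 := by
      rw [hc]; module
    rw [heq]
    exact hP2.add (smul_one_posSemidef (sub_nonneg.mpr (min_le_right ε ε')))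
  set WS := hW.sqrt with hWS
  have hWSps : WS.PosSemidef := hW.posSemidef_sqrt
  have hWW : WS * WS = c • (1 : Mat) - M := hW.sqrt_mul_self
  have hcomm : WS * M = M * WS := by
    have h1 : WS * (WS * WS) = (WS * WS) * WS := by rw [mul_assoc]
    rw [hWW, mul_sub, sub_mul, mul_smul_comm, smul_mul_assoc, mul_one, one_mul] at h1
    exact sub_right_inj.mp h1
  have hMt : Mᵀ = M := by rw [← conjT_eq_transpose]; exact hM
  have hkey : (c ^ 2) • (1 : Mat) - Mᵀ * M = WS * (c • (1 : Mat) + M) * WSᴴ := by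
    rw [hWSps.isHermitian.eq, hMt]
    have hstep : WS * (c • (1 : Mat) + M) = (c • (1 : Mat) + M) * WS := by
      rw [mul_add, add_mul, mul_smul_comm, smul_mul_assoc, mul_one, one_mul, hcomm]
    rw [hstep, mul_assoc, hWW]
    rw [add_mul, mul_sub, mul_sub, smul_mul_assoc, mul_smul_comm, smul_mul_assoc,
      mul_one, one_mul, smul_smul, mul_smul_comm, mul_one]
    rw [pow_two]
    abel
  have hfin : specNorm M ≤ c := by
    apply specNorm_le_of_posSemidef hc0
    rw [hkey]
    exact hW2.mul_mul_conjTranspose_same WS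
  exact lt_of_le_of_lt hfin hc1

noncomputable def mEuc (M : Mat) : EuclideanSpace ℝ (Fin d × Fin d) :=
  (WithLp.equiv 2 _).symm (fun p => M p.1 p.2)

lemma frobNorm_eq (M : Mat) : frobNorm M = ‖mEuc M‖ := by
  rw [EuclideanSpace.norm_eq]
  unfold frobNorm
  rw [Fintype.sum_prod_type]
  congr 1
  refine Finset.sum_congr rfl fun i _ => Finset.sum_congr rfl fun j _ => ?_
  rw [show mEuc M (i, j) = M i j from rfl, Real.norm_eq_abs, sq_abs]

lemma mEuc_add (M N : Mat) : mEuc (M + N) = mEuc M + mEuc N := rfl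

lemma frobNorm_nonneg (M : Mat) : 0 ≤ frobNorm M := Real.sqrt_nonneg _

lemma frobNorm_add_le (M N : Mat) : frobNorm (M + N) ≤ frobNorm M + frobNorm N := by
  rw [frobNorm_eq, frobNorm_eq, frobNorm_eq, mEuc_add]
  exact norm_add_le _ _

lemma frobNorm_transpose (M : Mat) : frobNorm Mᵀ = frobNorm M := by
  unfold frobNorm
  rw [Finset.sum_comm]
  rfl

lemma trace_mul_le_frob (M N : Mat) : (M * N).trace ≤ frobNorm M * frobNorm N := by
  have h : (M * N).trace = (inner ℝ (mEuc M) (mEuc Nᵀ) : ℝ) := by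
    rw [Matrix.trace, PiLp.inner_apply, Fintype.sum_prod_type]
    refine Finset.sum_congr rfl fun i _ => ?_
    rw [Matrix.diag_apply, Matrix.mul_apply]
    refine Finset.sum_congr rfl fun j _ => ?_
    simp [mEuc, RCLike.inner_apply, Matrix.transpose_apply, mul_comm]
  rw [h, frobNorm_eq, ← frobNorm_transpose N, frobNorm_eq]
  exact real_inner_le_norm _ _

lemma frobNorm_mul_le_sf (M N : Mat) : frobNorm (M * N) ≤ specNorm M * frobNorm N := by
  unfold frobNorm
  have key : ∑ i, ∑ j, ((M * N) i j) ^ 2 ≤ specNorm M ^ 2 * ∑ i, ∑ j, (N i j) ^ 2 := by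
    rw [Finset.sum_comm, Finset.sum_comm (γ := Fin d) (f := fun i j => (N i j) ^ 2)]
    rw [Finset.mul_sum]
    refine Finset.sum_le_sum fun j _ => ?_
    have := sumsq_mulVec_le M (fun k => N k j)
    simpa [Matrix.mul_apply, Matrix.mulVec, dotProduct] using this
  calc Real.sqrt (∑ i, ∑ j, ((M * N) i j) ^ 2)
      ≤ Real.sqrt (specNorm M ^ 2 * ∑ i, ∑ j, (N i j) ^ 2) := Real.sqrt_le_sqrt key
    _ = specNorm M * Real.sqrt (∑ i, ∑ j, (N i j) ^ 2) := by
        rw [Real.sqrt_mul (sq_nonneg _), Real.sqrt_sq (specNorm_nonneg M)]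

lemma frobNorm_mul_le_fs (M N : Mat) : frobNorm (M * N) ≤ frobNorm M * specNorm N := by
  calc frobNorm (M * N) = frobNorm ((M * N)ᵀ) := (frobNorm_transpose _).symm
    _ = frobNorm (Nᵀ * Mᵀ) := by rw [Matrix.transpose_mul]
    _ ≤ specNorm Nᵀ * frobNorm Mᵀ := frobNorm_mul_le_sf _ _
    _ = frobNorm M * specNorm N := by
        rw [specNorm_transpose, frobNorm_transpose]; ring

lemma trace_eq_sum_eigenvalues {Z : Mat} (hZ : Z.IsHermitian) :
    Z.trace = ∑ i, hZ.eigenvalues i := by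
  conv_lhs => rw [hZ.spectral_theorem, Unitary.conjStarAlgAut_apply]
  rw [Matrix.trace_mul_cycle, Unitary.star_mul_self_of_mem (hZ.eigenvectorUnitary).2, one_mul,
    Matrix.trace_diagonal]
  simp

lemma posDef_conj {Q : Mat} (hQ : Q.PosDef) {N : Mat} (hN : IsUnit N.det) :
    (N * Q * Nᵀ).PosDef := by
  have hQt : Qᵀ = Q := by rw [← conjT_eq_transpose]; exact hQ.isHermitian
  refine Matrix.PosDef.of_dotProduct_mulVec_pos ?_ ?_
  · rw [Matrix.IsHermitian, conjT_eq_transpose, Matrix.transpose_mul, Matrix.transpose_mul,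
      Matrix.transpose_transpose, hQt, mul_assoc]
  · intro x hx
    have hy : Nᵀ *ᵥ x ≠ 0 := by
      intro h
      apply hx
      have : (Nᵀ)⁻¹ *ᵥ (Nᵀ *ᵥ x) = 0 := by rw [h, Matrix.mulVec_zero]
      rwa [Matrix.mulVec_mulVec, Matrix.nonsing_inv_mul _ (by rwa [Matrix.det_transpose]),
        Matrix.one_mulVec] at this
    have key : star x ⬝ᵥ ((N * Q * Nᵀ) *ᵥ x) = star (Nᵀ *ᵥ x) ⬝ᵥ (Q *ᵥ (Nᵀ *ᵥ x)) := by
      rw [show star x = x from funext fun i => star_trivial _,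
        show star (Nᵀ *ᵥ x) = Nᵀ *ᵥ x from funext fun i => star_trivial _]
      rw [← Matrix.mulVec_mulVec, ← Matrix.mulVec_mulVec, Matrix.dotProduct_mulVec,
        ← Matrix.mulVec_transpose]
    rw [key]
    exact hQ.dotProduct_mulVec_pos hy

lemma isUnit_det_of_posDef {X : Mat} (hX : X.PosDef) : IsUnit X.det :=
  isUnit_iff_ne_zero.mpr hX.det_pos.ne'

lemma log_det_le {X Y : Mat} (hX : X.PosDef) (hY : Y.PosDef) :
    Real.log Y.det ≤ Real.log X.det + (X⁻¹ * (Y - X)).trace := by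
  set S := hY.posSemidef.sqrt with hS
  have hSps : S.PosSemidef := hY.posSemidef.posSemidef_sqrt
  have hSt : Sᵀ = S := by rw [← conjT_eq_transpose]; exact hSps.isHermitian
  have hSS : S * S = Y := hY.posSemidef.sqrt_mul_self
  have hdetS : IsUnit S.det := by
    refine isUnit_iff_ne_zero.mpr fun h => ?_
    have : Y.det = 0 := by rw [← hSS, Matrix.det_mul, h, mul_zero]
    exact hY.det_pos.ne' this
  set Z := S * X⁻¹ * S with hZdef
  have hZpd : Z.PosDef := by
    have := posDef_conj hX.inv hdetS
    rwa [hSt] at this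
  have hZh : Z.IsHermitian := hZpd.isHermitian
  have hXdet : IsUnit X.det := isUnit_det_of_posDef hX
  have hdetZ : Z.det = Y.det * X.det⁻¹ := by
    rw [hZdef, Matrix.det_mul, Matrix.det_mul, Matrix.det_nonsing_inv, Ring.inverse_eq_inv']
    rw [← hSS, Matrix.det_mul]
    ring
  have htrZ : Z.trace = (X⁻¹ * Y).trace := by
    rw [hZdef, Matrix.trace_mul_cycle, hSS, Matrix.trace_mul_comm]
  have heig : ∀ i, 0 < hZh.eigenvalues i := hZpd.eigenvalues_pos
  have hlogZ : Real.log Z.det = ∑ i, Real.log (hZh.eigenvalues i) := by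
    have : Z.det = ∏ i, hZh.eigenvalues i := by
      have := hZh.det_eq_prod_eigenvalues
      simpa using this
    rw [this, Real.log_prod fun i _ => (heig i).ne']
  have hsum : ∑ i, Real.log (hZh.eigenvalues i) ≤ Z.trace - d := by
    rw [trace_eq_sum_eigenvalues hZh]
    have : ∑ i, Real.log (hZh.eigenvalues i) ≤ ∑ i, (hZh.eigenvalues i - 1) :=
      Finset.sum_le_sum fun i _ => Real.log_le_sub_one_of_pos (heig i)
    rw [Finset.sum_sub_distrib] at this
    simpa using this
  have hYX : Real.log Y.det = Real.log X.det + Real.log Z.det := by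
    rw [hdetZ, Real.log_mul hY.det_pos.ne' (inv_ne_zero hX.det_pos.ne'), Real.log_inv]
    ring
  have hrhs : (X⁻¹ * (Y - X)).trace = (X⁻¹ * Y).trace - d := by
    rw [mul_sub, Matrix.trace_sub, Matrix.nonsing_inv_mul _ hXdet, Matrix.trace_one]
    simp
  rw [hYX, hrhs, ← htrZ, hlogZ]
  linarith [hsum]

lemma specNorm_inv_one_sub_le {B : Mat} (hdet : IsUnit ((1 : Mat) - B).det)
    (hb : specNorm B < 1) :
    specNorm ((1 - B)⁻¹) ≤ 1 / (1 - specNorm B) := by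
  have h := Matrix.nonsing_inv_mul _ hdet
  rw [mul_sub, mul_one] at h
  have hK : (1 - B)⁻¹ = 1 + (1 - B)⁻¹ * B := sub_eq_iff_eq_add.mp h
  have hbound : specNorm ((1 - B)⁻¹) ≤ 1 + specNorm ((1 - B)⁻¹) * specNorm B := by
    calc specNorm ((1 - B)⁻¹) = specNorm (1 + (1 - B)⁻¹ * B) := by rw [← hK]
      _ ≤ specNorm (1 : Mat) + specNorm ((1 - B)⁻¹ * B) := by
          unfold specNorm; rw [_root_.map_add]; exact norm_add_le _ _
      _ ≤ 1 + specNorm ((1 - B)⁻¹) * specNorm B :=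
          add_le_add specNorm_one_le (specNorm_mul_le _ _)
  have h1b : 0 < 1 - specNorm B := by linarith
  rw [le_div_iff₀ h1b]
  nlinarith [specNorm_nonneg ((1 - B)⁻¹)]

lemma dotProduct_self_pos' {x : Fin d → ℝ} (hx : x ≠ 0) : 0 < x ⬝ᵥ x := by
  have h0 : (0:ℝ) ≤ x ⬝ᵥ x := Finset.sum_nonneg fun i _ => mul_self_nonneg _
  rcases h0.lt_or_eq with h | h
  · exact h
  · exact absurd (dotProduct_self_eq_zero.mp h.symm) hx

lemma arith_aux {δ fa a q : ℝ} (hδ : 0 ≤ δ) (hfa : 0 ≤ fa) (ha : 0 < 1 - a)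
    (hq : q ≤ 1/(1-a) * fa * (2*δ*fa)) : (1/2)*q ≤ δ*(2+δ)*fa^2/(2*(1-a)) := by
  have h2a : (0:ℝ) < 2*(1-a) := by linarith
  rw [le_div_iff₀ h2a]
  have hq' : q*(1-a) ≤ 2*δ*fa^2 := by
    have hstep := mul_le_mul_of_nonneg_right hq ha.le
    calc q*(1-a) ≤ (1/(1-a)*fa*(2*δ*fa))*(1-a) := hstep
      _ = 2*δ*fa^2 := by field_simp
  nlinarith [mul_nonneg (mul_nonneg hδ hδ) (sq_nonneg fa)]

end StmtAux

open StmtAux in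
theorem stmt12 {d : ℕ} (Θs Θ H : Matrix (Fin d) (Fin d) ℝ)
    (hΘs : Θs.PosDef) (δ : ℝ) (hδ : δ ∈ Set.Icc (0:ℝ) 2)
    (hΘ : Θ.PosSemidef) (hle : (Θs - Θ).PosSemidef)
    (hnorm : specNorm (hΘ.sqrt * (hΘs.posSemidef.sqrt)⁻¹ - 1) ≤ δ)
    (hH : H.IsSymm) (h1 : (Θs⁻¹ - H).PosDef) (h2 : (H + Θs⁻¹).PosDef) :
    -(1/2) * Real.log ((1 - hΘ.sqrt * H * hΘ.sqrt).det) ≤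
      -(1/2) * Real.log ((1 - hΘs.posSemidef.sqrt * H * hΘs.posSemidef.sqrt).det)
      + (1/2) * ((Θ - Θs) * H).trace
      + δ * (2 + δ) * (frobNorm (hΘs.posSemidef.sqrt * H * hΘs.posSemidef.sqrt))^2 /
          (2 * (1 - specNorm (hΘs.posSemidef.sqrt * H * hΘs.posSemidef.sqrt))) := by
  obtain ⟨hδ0, hδ2⟩ := hδ
  set S := hΘs.posSemidef.sqrt with hSdef
  set T := hΘ.sqrt with hTdef
  have hSps : S.PosSemidef := hΘs.posSemidef.posSemidef_sqrt
  have hTps : T.PosSemidef := hΘ.posSemidef_sqrt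
  have hSt : Sᵀ = S := by rw [← conjT_eq_transpose]; exact hSps.isHermitian
  have hTt : Tᵀ = T := by rw [← conjT_eq_transpose]; exact hTps.isHermitian
  have hSS : S * S = Θs := hΘs.posSemidef.sqrt_mul_self
  have hTT : T * T = Θ := hΘ.sqrt_mul_self
  have hdetS : IsUnit S.det := by
    refine isUnit_iff_ne_zero.mpr fun h => ?_
    have : Θs.det = 0 := by rw [← hSS, Matrix.det_mul, h, mul_zero]
    exact hΘs.det_pos.ne' this
  have hSinv : S * S⁻¹ = 1 := Matrix.mul_nonsing_inv _ hdetS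
  have hinvS : S⁻¹ * S = 1 := Matrix.nonsing_inv_mul _ hdetS
  have hΘsinv : Θs⁻¹ = S⁻¹ * S⁻¹ := by rw [← hSS, Matrix.mul_inv_rev]
  have hSit : (S⁻¹)ᵀ = S⁻¹ := by rw [Matrix.transpose_nonsing_inv, hSt]
  have hHt : Hᵀ = H := hH
  set A := S * H * S with hA
  set B := T * H * T with hB
  set R := T * S⁻¹ with hR
  have hRt : Rᵀ = S⁻¹ * T := by rw [hR, Matrix.transpose_mul, hSit, hTt]
  -- A is Hermitian
  have hAt : Aᵀ = A := by
    rw [hA, Matrix.transpose_mul, Matrix.transpose_mul, hSt, hHt, mul_assoc]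
  have hAh : A.IsHermitian := by rw [Matrix.IsHermitian, conjT_eq_transpose]; exact hAt
  have hBt : Bᵀ = B := by
    rw [hB, Matrix.transpose_mul, Matrix.transpose_mul, hTt, hHt, mul_assoc]
  -- 1 ± A positive definite
  have hSΘsS : S * Θs⁻¹ * S = 1 := by
    rw [hΘsinv, ← mul_assoc, mul_assoc (S * S⁻¹), hSinv, one_mul, hinvS]
  have h1A : ((1 : Matrix (Fin d) (Fin d) ℝ) - A).PosDef := by
    have heq : (1 : Matrix (Fin d) (Fin d) ℝ) - A = S * (Θs⁻¹ - H) * Sᵀ := by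
      rw [hSt, mul_sub, sub_mul, hSΘsS, hA]
    rw [heq]; exact posDef_conj h1 hdetS
  have h2A : ((1 : Matrix (Fin d) (Fin d) ℝ) + A).PosDef := by
    have heq : (1 : Matrix (Fin d) (Fin d) ℝ) + A = S * (H + Θs⁻¹) * Sᵀ := by
      rw [hSt, mul_add, add_mul, hSΘsS, hA, add_comm]
    rw [heq]; exact posDef_conj h2 hdetS
  have ha1 : specNorm A < 1 := specNorm_lt_one hAh h1A h2A
  have ha0 : 0 ≤ specNorm A := specNorm_nonneg A
  -- specNorm R ≤ 1
  have hRtR : (1 : Matrix (Fin d) (Fin d) ℝ) - Rᵀ * R = S⁻¹ * (Θs - Θ) * (S⁻¹)ᵀ := by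
    rw [hSit, mul_sub, sub_mul, hRt, hR]
    congr 1
    · rw [← hSS]
      calc (1 : Matrix (Fin d) (Fin d) ℝ) = (S⁻¹ * S) * (S * S⁻¹) := by
            rw [hinvS, hSinv, one_mul]
        _ = S⁻¹ * (S * S) * S⁻¹ := by noncomm_ring
    · rw [← hTT]
      noncomm_ring
  have hRle : specNorm R ≤ 1 := by
    apply specNorm_le_of_posSemidef zero_le_one
    have hps : (S⁻¹ * (Θs - Θ) * (S⁻¹)ᵀ).PosSemidef := by
      have := hle.mul_mul_conjTranspose_same S⁻¹
      rwa [conjT_eq_transpose] at this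
    rw [one_pow, one_smul, hRtR]
    exact hps
  have hRtle : specNorm Rᵀ ≤ 1 := by rw [specNorm_transpose]; exact hRle
  have hBA : B = R * A * Rᵀ := by
    rw [hRt, hR, hA, hB]
    calc T * H * T = T * (S⁻¹ * S) * H * ((S * S⁻¹) * T) := by
          rw [hinvS, hSinv, one_mul, mul_one, mul_assoc]
      _ = T * S⁻¹ * (S * H * S) * (S⁻¹ * T) := by noncomm_ring
  -- quadratic form identities
  have hdotB : ∀ x : Fin d → ℝ, x ⬝ᵥ (B *ᵥ x) = (T *ᵥ x) ⬝ᵥ (H *ᵥ (T *ᵥ x)) := by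
    intro x
    rw [hB, ← Matrix.mulVec_mulVec, ← Matrix.mulVec_mulVec, Matrix.dotProduct_mulVec,
      ← Matrix.mulVec_transpose, hTt]
  have hdotQ : ∀ x : Fin d → ℝ, x ⬝ᵥ ((T * Θs⁻¹ * T) *ᵥ x) ≤ x ⬝ᵥ x := by
    intro x
    have hTQ : T * Θs⁻¹ * T = Rᵀᵀ * Rᵀ := by
      rw [Matrix.transpose_transpose, hRt, hR, hΘsinv]
      noncomm_ring
    rw [hTQ, dotProduct_transpose_mul]
    have hb := sumsq_mulVec_le Rᵀ x
    have hxx : x ⬝ᵥ x = ∑ i, x i ^ 2 := by simp [dotProduct, sq]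
    rw [hxx]
    calc ∑ i, (Rᵀ *ᵥ x) i ^ 2 ≤ specNorm Rᵀ ^ 2 * ∑ i, x i ^ 2 := hb
      _ ≤ 1 * ∑ i, x i ^ 2 := by
          apply mul_le_mul_of_nonneg_right _ (Finset.sum_nonneg fun _ _ => sq_nonneg _)
          calc specNorm Rᵀ ^ 2 ≤ 1 ^ 2 :=
                pow_le_pow_left₀ (specNorm_nonneg _) hRtle 2
            _ = 1 := one_pow 2
      _ = ∑ i, x i ^ 2 := one_mul _
  have hdotT : ∀ x : Fin d → ℝ, (T *ᵥ x) ⬝ᵥ (Θs⁻¹ *ᵥ (T *ᵥ x)) = x ⬝ᵥ ((T * Θs⁻¹ * T) *ᵥ x) := by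
    intro x
    rw [← Matrix.mulVec_mulVec, ← Matrix.mulVec_mulVec, Matrix.dotProduct_mulVec x,
      ← Matrix.mulVec_transpose, hTt]
  have h1B : ((1 : Matrix (Fin d) (Fin d) ℝ) - B).PosDef := by
    refine Matrix.PosDef.of_dotProduct_mulVec_pos ?_ ?_
    · rw [Matrix.IsHermitian, conjT_eq_transpose, Matrix.transpose_sub, Matrix.transpose_one, hBt]
    · intro x hx
      have hxs : star x = x := funext fun i => star_trivial _
      rw [hxs, Matrix.sub_mulVec, Matrix.one_mulVec, dotProduct_sub, hdotB]
      set y := T *ᵥ x with hy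
      have hxx : 0 < x ⬝ᵥ x := dotProduct_self_pos' hx
      by_cases hy0 : y = 0
      · rw [hy0]
        simpa using hxx
      · have hstr := h1.dotProduct_mulVec_pos hy0
        rw [show star y = y from funext fun i => star_trivial _, Matrix.sub_mulVec,
          dotProduct_sub] at hstr
        have hQ := hdotQ x
        rw [← hdotT x] at hQ
        linarith
  -- norm comparisons
  have hblea : specNorm B ≤ specNorm A := by
    rw [hBA]
    calc specNorm (R * A * Rᵀ) ≤ specNorm (R * A) * specNorm Rᵀ := specNorm_mul_le _ _
      _ ≤ specNorm R * specNorm A * specNorm Rᵀ :=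
          mul_le_mul_of_nonneg_right (specNorm_mul_le _ _) (specNorm_nonneg _)
      _ ≤ 1 * specNorm A * 1 := by
          apply mul_le_mul
          · exact mul_le_mul_of_nonneg_right hRle (specNorm_nonneg _)
          · exact hRtle
          · exact specNorm_nonneg _
          · positivity
      _ = specNorm A := by ring
  have hb1 : specNorm B < 1 := lt_of_le_of_lt hblea ha1
  have hfB : frobNorm B ≤ frobNorm A := by
    rw [hBA]
    calc frobNorm (R * A * Rᵀ) ≤ frobNorm (R * A) * specNorm Rᵀ := frobNorm_mul_le_fs _ _
      _ ≤ specNorm R * frobNorm A * specNorm Rᵀ :=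
          mul_le_mul_of_nonneg_right (frobNorm_mul_le_sf _ _) (specNorm_nonneg _)
      _ ≤ 1 * frobNorm A * 1 := by
          apply mul_le_mul
          · exact mul_le_mul_of_nonneg_right hRle (frobNorm_nonneg _)
          · exact hRtle
          · exact specNorm_nonneg _
          · exact mul_nonneg zero_le_one (frobNorm_nonneg _)
      _ = frobNorm A := by ring
  have hdiff : B - A = (R - 1) * (A * Rᵀ) + A * (R - 1)ᵀ := by
    rw [hBA, Matrix.transpose_sub, Matrix.transpose_one]
    noncomm_ring
  have hfdiff : frobNorm (B - A) ≤ 2 * δ * frobNorm A := by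
    rw [hdiff]
    have h1' : frobNorm ((R - 1) * (A * Rᵀ)) ≤ δ * frobNorm A := by
      calc frobNorm ((R - 1) * (A * Rᵀ)) ≤ specNorm (R - 1) * frobNorm (A * Rᵀ) :=
            frobNorm_mul_le_sf _ _
        _ ≤ δ * (frobNorm A * specNorm Rᵀ) := by
            apply mul_le_mul hnorm (frobNorm_mul_le_fs _ _) (frobNorm_nonneg _)
              (le_trans (specNorm_nonneg _) hnorm)
        _ ≤ δ * (frobNorm A * 1) :=
            mul_le_mul_of_nonneg_left
              (mul_le_mul_of_nonneg_left hRtle (frobNorm_nonneg _)) hδ0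
        _ = δ * frobNorm A := by ring
    have h2' : frobNorm (A * (R - 1)ᵀ) ≤ δ * frobNorm A := by
      calc frobNorm (A * (R - 1)ᵀ) ≤ frobNorm A * specNorm ((R - 1)ᵀ) := frobNorm_mul_le_fs _ _
        _ ≤ frobNorm A * δ := by
            rw [specNorm_transpose]
            exact mul_le_mul_of_nonneg_left hnorm (frobNorm_nonneg _)
        _ = δ * frobNorm A := by ring
    calc frobNorm ((R - 1) * (A * Rᵀ) + A * (R - 1)ᵀ)
        ≤ frobNorm ((R - 1) * (A * Rᵀ)) + frobNorm (A * (R - 1)ᵀ) := frobNorm_add_le _ _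
      _ ≤ δ * frobNorm A + δ * frobNorm A := add_le_add h1' h2'
      _ = 2 * δ * frobNorm A := by ring
  -- log det inequality
  have hlog := log_det_le h1B h1A
  have hsub : (1 : Matrix (Fin d) (Fin d) ℝ) - A - ((1 : Matrix (Fin d) (Fin d) ℝ) - B)
      = B - A := by abel
  rw [hsub] at hlog
  -- decompose the trace term
  have hdet1B : IsUnit ((1 : Matrix (Fin d) (Fin d) ℝ) - B).det := isUnit_det_of_posDef h1B
  have hKinv := Matrix.nonsing_inv_mul _ hdet1B
  rw [mul_sub, mul_one] at hKinv
  have hKeq : ((1 : Matrix (Fin d) (Fin d) ℝ) - B)⁻¹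
      = 1 + ((1 : Matrix (Fin d) (Fin d) ℝ) - B)⁻¹ * B := sub_eq_iff_eq_add.mp hKinv
  have htrsplit : (((1 : Matrix (Fin d) (Fin d) ℝ) - B)⁻¹ * (B - A)).trace
      = (B - A).trace + ((((1 : Matrix (Fin d) (Fin d) ℝ) - B)⁻¹ * B) * (B - A)).trace := by
    conv_lhs => rw [hKeq]
    rw [add_mul, one_mul, Matrix.trace_add]
  have htrBA : (B - A).trace = ((Θ - Θs) * H).trace := by
    rw [Matrix.trace_sub, hB, hA, Matrix.trace_mul_cycle, Matrix.trace_mul_cycle S H S,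
      hTT, hSS, Matrix.sub_mul, Matrix.trace_sub, Matrix.trace_mul_comm,
      Matrix.trace_mul_comm Θs H]
  -- bound the quadratic trace term
  have hKnorm : specNorm (((1 : Matrix (Fin d) (Fin d) ℝ) - B)⁻¹)
      ≤ 1 / (1 - specNorm B) := specNorm_inv_one_sub_le hdet1B hb1
  have h1a : (0:ℝ) < 1 - specNorm A := by linarith
  have h1b : (0:ℝ) < 1 - specNorm B := by linarith
  have hKA : specNorm (((1 : Matrix (Fin d) (Fin d) ℝ) - B)⁻¹) ≤ 1 / (1 - specNorm A) := by
    refine le_trans hKnorm ?_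
    apply one_div_le_one_div_of_le h1a
    linarith
  have hquad : ((((1 : Matrix (Fin d) (Fin d) ℝ) - B)⁻¹ * B) * (B - A)).trace
      ≤ (1 / (1 - specNorm A)) * frobNorm A * (2 * δ * frobNorm A) := by
    calc ((((1 : Matrix (Fin d) (Fin d) ℝ) - B)⁻¹ * B) * (B - A)).trace
        ≤ frobNorm (((1 : Matrix (Fin d) (Fin d) ℝ) - B)⁻¹ * B) * frobNorm (B - A) :=
          trace_mul_le_frob _ _
      _ ≤ (1 / (1 - specNorm A)) * frobNorm A * (2 * δ * frobNorm A) := by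
          have hchain : frobNorm (((1 : Matrix (Fin d) (Fin d) ℝ) - B)⁻¹ * B)
              ≤ (1 / (1 - specNorm A)) * frobNorm A := by
            calc frobNorm (((1 : Matrix (Fin d) (Fin d) ℝ) - B)⁻¹ * B)
                ≤ specNorm (((1 : Matrix (Fin d) (Fin d) ℝ) - B)⁻¹) * frobNorm B :=
                  frobNorm_mul_le_sf _ _
              _ ≤ (1 / (1 - specNorm A)) * frobNorm A :=
                  mul_le_mul hKA hfB (frobNorm_nonneg _) (by positivity)
          exact mul_le_mul hchain hfdiff (frobNorm_nonneg _)
            (mul_nonneg (by positivity) (frobNorm_nonneg _))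
  have harith : (1/2) * ((((1 : Matrix (Fin d) (Fin d) ℝ) - B)⁻¹ * B * (B - A)).trace)
      ≤ δ * (2 + δ) * frobNorm A ^ 2 / (2 * (1 - specNorm A)) :=
    arith_aux hδ0 (frobNorm_nonneg A) h1a hquad
  rw [htrsplit, htrBA] at hlog
  linarith
end
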